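/- arXiv:2408.06489 — 7 statements merged into one kernel-verified Lean document; each statement's English description precedes it below -/
import Mathlib

section
/- Let N be a DAG. Then N is weakly forest-based if and only if N admits a leaf path partition. -/
/-!
Basic notions for finite directed acyclic graphs (DAGs), represented by an
adjacency (arc) relation `A` on a vertex type `V`.
-/

namespace Paper

variable {V : Type*}

/-- A leaf (sink) of the digraph `A`: a vertex of outdegree 0. -/
def IsLeaf (A : V → V → Prop) (v : V) : Prop := ∀ w, ¬ A v w

/-- A root (source) of the digraph `A`: a vertex of indegree 0. -/
def IsRoot (A : V → V → Prop) (v : V) : Prop := ∀ w, ¬ A w v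

/-- The arc relation `A` is acyclic (no directed cycles). -/
def Acyclic (A : V → V → Prop) : Prop := ∀ v, ¬ Relation.TransGen A v v

/-- A directed path in the digraph `A`: a nonempty list of pairwise distinct
vertices, consecutive ones joined by arcs. -/
def IsPath (A : V → V → Prop) (p : List V) : Prop :=
  p ≠ [] ∧ p.Nodup ∧ p.Chain' A

/-- An induced directed path: a directed path such that the only arcs of the
digraph among its vertices are the consecutive arcs of the path. -/
def IsInducedPath (A : V → V → Prop) (p : List V) : Prop :=
  IsPath A p ∧ ∀ i j : Fin p.length, A (p.get i) (p.get j) → (j : ℕ) = (i : ℕ) + 1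

/-- A path partition: a collection of vertex-disjoint directed paths whose
vertex sets partition `V` (every vertex lies in exactly one member). -/
def IsPathPartition (A : V → V → Prop) (P : Set (List V)) : Prop :=
  (∀ p ∈ P, IsPath A p) ∧ ∀ v : V, ∃! p, p ∈ P ∧ v ∈ p

/-- The path `p` ends at a leaf of the digraph `A`. -/
def EndsAtLeaf (A : V → V → Prop) (p : List V) : Prop :=
  ∃ x, p.getLast? = some x ∧ IsLeaf A x

/-- A leaf path partition: a path partition all of whose paths end at a leaf. -/
def IsLeafPP (A : V → V → Prop) (P : Set (List V)) : Prop :=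
  IsPathPartition A P ∧ ∀ p ∈ P, EndsAtLeaf A p

/-- A leaf induced path partition: a leaf path partition all of whose paths are
induced paths. -/
def IsLeafIPP (A : V → V → Prop) (P : Set (List V)) : Prop :=
  IsLeafPP A P ∧ ∀ p ∈ P, IsInducedPath A p

/-- A forest: an acyclic digraph in which every vertex has indegree at most one
(equivalently, every connected component of the underlying undirected graph is
a tree, i.e. is connected, has a single root and no vertex of indegree ≥ 2). -/
def IsForest (F : V → V → Prop) : Prop :=
  Acyclic F ∧ ∀ ⦃u w v⦄, F u v → F w v → u = w

/-- `N = (V, A)` is weakly forest-based: there is a subrelation `F` of `A` that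
is a spanning forest whose leaf set equals the leaf set of `N`. -/
def WeaklyForestBased (A : V → V → Prop) : Prop :=
  ∃ F : V → V → Prop, (∀ ⦃u v⦄, F u v → A u v) ∧ IsForest F ∧
    ∀ v, IsLeaf F v ↔ IsLeaf A v

/-- Reachability in the underlying undirected graph of `F` (i.e. being in the
same connected component of `F`). -/
def UndirReach (F : V → V → Prop) : V → V → Prop :=
  Relation.ReflTransGen fun a b => F a b ∨ F b a

/-- `N = (V, A)` is forest-based: there is a subrelation `F` of `A` that is a
spanning forest whose leaf set equals the leaf set of `N`, such that every arc
of `A` not in `F` has its endpoints in different trees (connected components)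
of `F`. -/
def ForestBased (A : V → V → Prop) : Prop :=
  ∃ F : V → V → Prop, (∀ ⦃u v⦄, F u v → A u v) ∧ IsForest F ∧
    (∀ v, IsLeaf F v ↔ IsLeaf A v) ∧
    ∀ u v, A u v → ¬ F u v → ¬ UndirReach F u v

section Aux

variable {V : Type*}

open Classical in
/-- Choose a child of `v` in `F`, if any. -/
noncomputable def succF (F : V → V → Prop) (v : V) : Option V :=
  if h : IsLeaf F v then none else some (Classical.choose (_root_.not_forall_not.mp h))

lemma succF_eq_none {F : V → V → Prop} {v : V} : succF F v = none ↔ IsLeaf F v := by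
  unfold succF; split <;> simp_all

lemma succF_spec {F : V → V → Prop} {v w : V} (h : succF F v = some w) : F v w := by
  unfold succF at h
  split at h
  · simp at h
  · next h' =>
      obtain rfl : Classical.choose (_root_.not_forall_not.mp h') = w := by injection h
      exact Classical.choose_spec (_root_.not_forall_not.mp h')

/-- The arc relation "chosen child". -/
def SArc (F : V → V → Prop) (a b : V) : Prop := succF F a = some b

/-- Follow chosen children for at most `n` steps. -/
noncomputable def goF (F : V → V → Prop) : ℕ → V → List V
  | 0, v => [v]
  | (n+1), v =>
    match succF F v with
    | none => [v]
    | some w => v :: goF F n w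

variable {F : V → V → Prop}

lemma goF_zero {v : V} : goF F 0 v = [v] := rfl

lemma goF_succ_none {n : ℕ} {v : V} (h : succF F v = none) : goF F (n+1) v = [v] := by
  simp [goF, h]

lemma goF_succ_some {n : ℕ} {v w : V} (h : succF F v = some w) :
    goF F (n+1) v = v :: goF F n w := by
  simp [goF, h]

lemma goF_cons (n : ℕ) (v : V) : ∃ t, goF F n v = v :: t := by
  cases n with
  | zero => exact ⟨[], rfl⟩
  | succ n =>
    cases h : succF F v with
    | none => exact ⟨[], goF_succ_none h⟩
    | some w => exact ⟨goF F n w, goF_succ_some h⟩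

lemma goF_ne_nil (n : ℕ) (v : V) : goF F n v ≠ [] := by
  obtain ⟨t, ht⟩ := goF_cons (F := F) n v; simp [ht]

lemma self_mem_goF (n : ℕ) (v : V) : v ∈ goF F n v := by
  obtain ⟨t, ht⟩ := goF_cons (F := F) n v; simp [ht]

lemma mem_goF_reach : ∀ (n : ℕ) (v x : V), x ∈ goF F n v →
    Relation.ReflTransGen (SArc F) v x := by
  intro n
  induction n with
  | zero => intro v x hx; rw [goF_zero, List.mem_singleton] at hx; subst hx; rfl
  | succ n ih =>
    intro v x hx
    cases h : succF F v with
    | none => rw [goF_succ_none h, List.mem_singleton] at hx; subst hx; rfl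
    | some w =>
      rw [goF_succ_some h, List.mem_cons] at hx
      rcases hx with rfl | hx
      · rfl
      · exact Relation.ReflTransGen.head h (ih w x hx)

lemma goF_chain' {R : V → V → Prop} (hR : ∀ a b, succF F a = some b → R a b) :
    ∀ (n : ℕ) (v : V), (goF F n v).Chain' R := by
  intro n
  induction n with
  | zero => intro v; simp [goF_zero]; exact List.isChain_singleton v
  | succ n ih =>
    intro v
    cases h : succF F v with
    | none => simp [goF_succ_none h]; exact List.isChain_singleton v
    | some w =>
      rw [goF_succ_some h]
      obtain ⟨t, ht⟩ := goF_cons (F := F) n w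
      rw [ht]
      exact List.isChain_cons_cons.mpr ⟨hR _ _ h, ht ▸ ih w⟩

lemma goF_nodup (hacy : Acyclic F) : ∀ (n : ℕ) (v : V), (goF F n v).Nodup := by
  intro n
  induction n with
  | zero => intro v; simp [goF_zero]
  | succ n ih =>
    intro v
    cases h : succF F v with
    | none => simp [goF_succ_none h]
    | some w =>
      rw [goF_succ_some h, List.nodup_cons]
      refine ⟨fun hv => ?_, ih w⟩
      have hr : Relation.ReflTransGen F w v :=
        Relation.ReflTransGen.mono (r := SArc F) (p := F) (fun a b hab => succF_spec hab) w v (mem_goF_reach n w v hv)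
      exact hacy v (Relation.TransGen.head' (succF_spec h) hr)

lemma mem_goF_succ : ∀ (n : ℕ) (v x : V), x ∈ goF F n v → x ∈ goF F (n+1) v := by
  intro n
  induction n with
  | zero =>
    intro v x hx
    rw [goF_zero, List.mem_singleton] at hx; subst hx
    exact self_mem_goF 1 _
  | succ n ih =>
    intro v x hx
    cases h : succF F v with
    | none => rwa [goF_succ_none h] at hx ⊢
    | some w =>
      rw [goF_succ_some h] at hx
      rw [goF_succ_some h, List.mem_cons]
      rcases List.mem_cons.mp hx with rfl | hx
      · exact Or.inl rfl
      · exact Or.inr (ih w x hx)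

lemma mem_goF_mono {n m : ℕ} (hnm : n ≤ m) {v x : V} (hx : x ∈ goF F n v) :
    x ∈ goF F m v := by
  induction hnm with
  | refl => exact hx
  | step _ ih => exact mem_goF_succ _ _ _ ih

lemma goF_last_or_length : ∀ (n : ℕ) (v : V),
    (∃ x, (goF F n v).getLast? = some x ∧ succF F x = none) ∨
      (goF F n v).length = n + 1 := by
  intro n
  induction n with
  | zero =>
    intro v
    cases h : succF F v with
    | none => exact Or.inl ⟨v, by simp [goF_zero], h⟩
    | some w => exact Or.inr (by simp [goF_zero])
  | succ n ih =>
    intro v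
    cases h : succF F v with
    | none => exact Or.inl ⟨v, by simp [goF_succ_none h], h⟩
    | some w =>
      rw [goF_succ_some h]
      obtain ⟨t, ht⟩ := goF_cons (F := F) n w
      rcases ih w with ⟨x, hx, hx'⟩ | hlen
      · left
        refine ⟨x, ?_, hx'⟩
        rw [ht] at hx ⊢
        rw [List.getLast?_cons_cons]
        exact hx
      · right
        simp [hlen]

lemma goF_stab : ∀ (n : ℕ) (v : V),
    (∃ x, (goF F n v).getLast? = some x ∧ succF F x = none) →
      goF F (n+1) v = goF F n v := by
  intro n
  induction n with
  | zero =>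
    rintro v ⟨x, hx, hx'⟩
    rw [goF_zero] at hx ⊢
    simp only [List.getLast?_singleton, Option.some.injEq] at hx
    subst hx
    exact goF_succ_none hx'
  | succ n ih =>
    rintro v ⟨x, hx, hx'⟩
    cases h : succF F v with
    | none => rw [goF_succ_none h, goF_succ_none h]
    | some w =>
      rw [goF_succ_some h] at hx
      obtain ⟨t, ht⟩ := goF_cons (F := F) n w
      rw [ht, List.getLast?_cons_cons, ← ht] at hx
      rw [goF_succ_some h, goF_succ_some h, ih w ⟨x, hx, hx'⟩]

lemma goF_stab' {n : ℕ} {v : V}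
    (h : ∃ x, (goF F n v).getLast? = some x ∧ succF F x = none)
    {m : ℕ} (hnm : n ≤ m) : goF F m v = goF F n v := by
  induction hnm with
  | refl => rfl
  | step h' ih => rw [goF_stab _ _ (ih ▸ h), ih]

lemma goF_last_leaf [Fintype V] (hacy : Acyclic F) (v : V) :
    ∃ x, (goF F (Fintype.card V) v).getLast? = some x ∧ succF F x = none := by
  rcases goF_last_or_length (F := F) (Fintype.card V) v with h | h
  · exact h
  · exfalso
    have := (goF_nodup hacy (Fintype.card V) v).length_le_card
    omega

lemma mem_goF_card [Fintype V] (hacy : Acyclic F) {n : ℕ} {v x : V}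
    (hx : x ∈ goF F n v) : x ∈ goF F (Fintype.card V) v := by
  rcases le_total n (Fintype.card V) with h | h
  · exact mem_goF_mono h hx
  · rwa [goF_stab' (goF_last_leaf hacy v) h] at hx

lemma reach_mem_goF {u v : V} (h : Relation.ReflTransGen (SArc F) u v) :
    ∃ n, v ∈ goF F n u := by
  induction h using Relation.ReflTransGen.head_induction_on with
  | refl => exact ⟨0, self_mem_goF 0 v⟩
  | head hac _ ih =>
    obtain ⟨n, hn⟩ := ih
    exact ⟨n + 1, by rw [goF_succ_some hac]; exact List.mem_cons_of_mem _ hn⟩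

/-- A start vertex: one with no chosen parent. -/
def StartF (F : V → V → Prop) (v : V) : Prop := ∀ u, succF F u ≠ some v

lemma sarc_wf [Finite V] (hacy : Acyclic F) : WellFounded (SArc F) := by
  haveI : IsTrans V (Relation.TransGen F) := ⟨fun _ _ _ => Relation.TransGen.trans⟩
  haveI : IsIrrefl V (Relation.TransGen F) := ⟨hacy⟩
  exact Subrelation.wf (fun h => Relation.TransGen.single (succF_spec h))
    (Finite.wellFounded_of_trans_of_irrefl (Relation.TransGen F))

lemma exists_start [Finite V] (hacy : Acyclic F) (v : V) :
    ∃ u, StartF F u ∧ Relation.ReflTransGen (SArc F) u v := by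
  induction v using (sarc_wf hacy).induction with
  | _ v ih =>
    by_cases h : StartF F v
    · exact ⟨v, h, Relation.ReflTransGen.refl⟩
    · simp only [StartF, not_forall, not_not] at h
      obtain ⟨u, hu⟩ := h
      obtain ⟨s, hs, hr⟩ := ih u hu
      exact ⟨s, hs, hr.tail hu⟩

lemma start_unique [Finite V] (hforest : IsForest F) {u₁ u₂ : V}
    (h₁ : StartF F u₁) (h₂ : StartF F u₂) : ∀ v : V,
    Relation.ReflTransGen (SArc F) u₁ v → Relation.ReflTransGen (SArc F) u₂ v →
      u₁ = u₂ := by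
  intro v
  induction v using (sarc_wf hforest.1).induction with
  | _ v ih =>
    intro hr₁ hr₂
    rcases hr₁.cases_tail with rfl | ⟨c₁, hc₁, hcv₁⟩
    · rcases hr₂.cases_tail with rfl | ⟨c₂, hc₂, hcv₂⟩
      · rfl
      · exact absurd hcv₂ (h₁ c₂)
    · rcases hr₂.cases_tail with rfl | ⟨c₂, hc₂, hcv₂⟩
      · exact absurd hcv₁ (h₂ c₁)
      · have hcc : c₁ = c₂ := hforest.2 (succF_spec hcv₁) (succF_spec hcv₂)
        subst hcc
        exact ih c₁ hcv₁ hc₁ hc₂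

end Aux

/-- Let `N` be a (finite) DAG. Then `N` is weakly forest-based
if and only if `N` admits a leaf path partition. -/
theorem weaklyForestBased_iff_leafPathPartition
    {V : Type*} [Fintype V] (A : V → V → Prop) (hacy : Acyclic A) :
    WeaklyForestBased A ↔ ∃ P : Set (List V), IsLeafPP A P := by
  constructor
  · rintro ⟨F, hFA, hforest, hleaf⟩
    refine ⟨{l | ∃ u, StartF F u ∧ l = goF F (Fintype.card V) u}, ⟨⟨?_, ?_⟩, ?_⟩⟩
    · rintro p ⟨u, hu, rfl⟩
      exact ⟨goF_ne_nil _ u, goF_nodup hforest.1 _ u,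
        goF_chain' (fun a b h => hFA (succF_spec h)) _ u⟩
    · intro v
      obtain ⟨u, hu, hr⟩ := exists_start hforest.1 v
      obtain ⟨n, hn⟩ := reach_mem_goF hr
      refine ⟨goF F (Fintype.card V) u, ⟨⟨u, hu, rfl⟩, mem_goF_card hforest.1 hn⟩, ?_⟩
      rintro q ⟨⟨u', hu', rfl⟩, hvq⟩
      have huu : u' = u := start_unique hforest hu' hu v (mem_goF_reach _ u' v hvq) hr
      rw [huu]
    · rintro p ⟨u, hu, rfl⟩
      obtain ⟨x, hx, hx'⟩ := goF_last_leaf hforest.1 u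
      exact ⟨x, hx, (hleaf x).mp (succF_eq_none.mp hx')⟩
  · rintro ⟨P, ⟨⟨hpaths, hpart⟩, hends⟩⟩
    set F : V → V → Prop :=
      fun u v => ∃ p ∈ P, ∃ i : ℕ, p[i]? = some u ∧ p[i+1]? = some v with hFdef
    have hFA : ∀ ⦃u v⦄, F u v → A u v := by
      rintro u v ⟨p, hp, i, hu, hv⟩
      obtain ⟨h1, rfl⟩ := List.getElem?_eq_some_iff.mp hu
      obtain ⟨h2, rfl⟩ := List.getElem?_eq_some_iff.mp hv
      have hc := List.isChain_iff_getElem.mp (hpaths p hp).2.2 i (by omega)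
      simpa using hc
    have hmem : ∀ {p : List V} {i : ℕ} {v : V}, p[i]? = some v → v ∈ p := by
      intro p i v h
      obtain ⟨h1, rfl⟩ := List.getElem?_eq_some_iff.mp h
      exact List.getElem_mem _
    refine ⟨F, hFA, ⟨fun v hv => hacy v (Relation.TransGen.mono (r := F) (p := A) (fun a b h => hFA h) v v hv), ?_⟩, ?_⟩
    · rintro u w v ⟨p, hp, i, hu, hv⟩ ⟨q, hq, j, hw, hv'⟩
      obtain ⟨r, -, hr⟩ := hpart v
      have hpq : p = q := (hr p ⟨hp, hmem hv⟩).trans (hr q ⟨hq, hmem hv'⟩).symm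
      subst hpq
      have hij : i + 1 = j + 1 :=
        (List.getElem?_inj (List.getElem?_eq_some_iff.mp hv).1 (hpaths p hp).2.1).mp
          (hv.trans hv'.symm)
      have hij' : i = j := by omega
      subst hij'
      exact Option.some.inj (hu.symm.trans hw)
    · intro v
      constructor
      · intro hv
        obtain ⟨p, ⟨hp, hvp⟩, -⟩ := hpart v
        obtain ⟨i, hi, hiv⟩ := List.mem_iff_getElem.mp hvp
        by_cases hlt : i + 1 < p.length
        · exfalso
          refine hv p[i+1] ⟨p, hp, i, ?_, ?_⟩
          · rw [List.getElem?_eq_some_iff]; exact ⟨hi, hiv⟩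
          · rw [List.getElem?_eq_some_iff]; exact ⟨hlt, rfl⟩
        · obtain ⟨x, hx, hxleaf⟩ := hends p hp
          have hieq : i = p.length - 1 := by omega
          rw [List.getLast?_eq_getElem?, ← hieq, List.getElem?_eq_some_iff] at hx
          obtain ⟨hxl, hx2⟩ := hx
          have hxv : x = v := by rw [← hx2, hiv]
          rwa [hxv] at hxleaf
      · intro hv w hFw
        exact hv w (hFA hFw)

end Paper
end

section
/- Let N be a DAG. Then N is forest-based if and only if N admits a leaf induced path partition. -/
/-!
Basic notions for finite directed acyclic graphs (DAGs), represented by an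
adjacency (arc) relation `A` on a vertex type `V`.
-/

namespace Paper

variable {V : Type*}

section AuxLemmas

lemma acyclic_wf [Finite V] {A : V → V → Prop} (h : Acyclic A) : WellFounded A := by
  have h1 : IsTrans V (Relation.TransGen A) := ⟨fun a b c => Relation.TransGen.trans⟩
  have h2 : IsIrrefl V (Relation.TransGen A) := ⟨h⟩
  exact Subrelation.wf (fun {x y} hxy => Relation.TransGen.single hxy)
    (Finite.wellFounded_of_trans_of_irrefl _)

lemma acyclic_flip {A : V → V → Prop} (h : Acyclic A) : Acyclic (Function.swap A) := by
  intro v hv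
  exact h v (Relation.transGen_swap.mp hv)

lemma nodup_of_chain' {A : V → V → Prop} (h : Acyclic A) {l : List V}
    (hc : l.Chain' A) : l.Nodup := by
  have hc' : l.Chain' (Relation.TransGen A) := hc.imp fun _ _ h => Relation.TransGen.single h
  have : IsTrans V (Relation.TransGen A) := ⟨fun a b c => Relation.TransGen.trans⟩
  have hp : l.Pairwise (Relation.TransGen A) := List.isChain_iff_pairwise.mp hc'
  exact hp.imp fun {a b} hab => by rintro rfl; exact h a hab

lemma transGen_of_chain' {A : V → V → Prop} {l : List V} (hc : l.Chain' A)
    {i j : Fin l.length} (hij : i < j) : Relation.TransGen A (l.get i) (l.get j) := by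
  have hc' : l.Chain' (Relation.TransGen A) := hc.imp fun _ _ h => Relation.TransGen.single h
  have : IsTrans V (Relation.TransGen A) := ⟨fun a b c => Relation.TransGen.trans⟩
  exact List.pairwise_iff_get.mp (List.isChain_iff_pairwise.mp hc') i j hij

/-- The successor relation of a partial function `next`. -/
def Step (next : V → Option V) : V → V → Prop := fun u v => next u = some v

/-- Forward chain following `next` until it returns `none`. -/
noncomputable def fwd (next : V → Option V)
    (hwf : WellFounded (fun w v => next v = some w)) : V → List V :=
  WellFounded.fix hwf (fun v ih =>
    match h : next v with
    | none => [v]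
    | some w => v :: ih w h)

variable {next : V → Option V} {hwf : WellFounded (fun w v => next v = some w)}

lemma fwd_eq_none {v : V} (h : next v = none) : fwd next hwf v = [v] := by
  conv_lhs => rw [fwd]
  rw [WellFounded.fix_eq]
  split
  · rfl
  · rename_i w' h'
    rw [h'] at h
    cases h

lemma fwd_eq_some {v w : V} (h : next v = some w) :
    fwd next hwf v = v :: fwd next hwf w := by
  conv_lhs => rw [fwd]
  rw [WellFounded.fix_eq]
  split
  · rename_i h'
    rw [h'] at h
    cases h
  · rename_i w' h'
    rw [h'] at h
    injection h with h
    subst h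
    rfl

lemma fwd_cons (v : V) : ∃ t, fwd next hwf v = v :: t := by
  cases h : next v with
  | none => exact ⟨[], fwd_eq_none h⟩
  | some w => exact ⟨fwd next hwf w, fwd_eq_some h⟩

lemma fwd_ne_nil (v : V) : fwd next hwf v ≠ [] := by
  obtain ⟨t, ht⟩ := fwd_cons (next := next) (hwf := hwf) v
  simp [ht]

lemma fwd_chain' (v : V) : (fwd next hwf v).Chain' (Step next) := by
  induction v using WellFounded.induction hwf with
  | _ v ih =>
    cases h : next v with
    | none => rw [fwd_eq_none h]; exact List.isChain_singleton _
    | some w =>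
      rw [fwd_eq_some h]
      show List.IsChain (Step next) (v :: fwd next hwf w)
      rw [List.isChain_cons]
      refine ⟨?_, ih w h⟩
      intro y hy
      obtain ⟨t, ht⟩ := fwd_cons (next := next) (hwf := hwf) w
      rw [ht] at hy
      simp at hy
      subst hy
      exact h

lemma mem_fwd {u v : V} : u ∈ fwd next hwf v ↔ Relation.ReflTransGen (Step next) v u := by
  constructor
  · intro hu
    induction v using WellFounded.induction hwf with
    | _ v ih =>
      cases h : next v with
      | none =>
        rw [fwd_eq_none h] at hu
        simp at hu
        subst hu; exact Relation.ReflTransGen.refl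
      | some w =>
        rw [fwd_eq_some h] at hu
        rcases List.mem_cons.mp hu with rfl | hu
        · exact Relation.ReflTransGen.refl
        · exact Relation.ReflTransGen.head h (ih w h hu)
  · intro hr
    induction hr using Relation.ReflTransGen.head_induction_on with
    | refl =>
      obtain ⟨t, ht⟩ := fwd_cons (next := next) (hwf := hwf) u
      rw [ht]; exact List.mem_cons_self
    | head h' hrest ih =>
      rw [fwd_eq_some h']
      exact List.mem_cons_of_mem _ ih

lemma fwd_getLast (v : V) : ∃ x, (fwd next hwf v).getLast? = some x ∧ next x = none := by
  induction v using WellFounded.induction hwf with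
  | _ v ih =>
    cases h : next v with
    | none => exact ⟨v, by rw [fwd_eq_none h]; rfl, h⟩
    | some w =>
      obtain ⟨x, hx1, hx2⟩ := ih w h
      refine ⟨x, ?_, hx2⟩
      rw [fwd_eq_some h]
      obtain ⟨t, ht⟩ := fwd_cons (next := next) (hwf := hwf) w
      rw [ht] at hx1 ⊢
      rw [List.getLast?_cons_cons]
      exact hx1

/-- two sources reaching the same vertex along a co-functional relation coincide -/
lemma reach_comp {S : V → V → Prop} (huniq : ∀ ⦃c c' v⦄, S c v → S c' v → c = c')
    {a b v : V} (ha : Relation.ReflTransGen S a v) (hb : Relation.ReflTransGen S b v) :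
    Relation.ReflTransGen S a b ∨ Relation.ReflTransGen S b a := by
  revert ha
  induction hb with
  | refl => exact fun ha => Or.inl ha
  | @tail c v' hbc hcv ih =>
    intro ha
    rcases Relation.ReflTransGen.cases_tail ha with rfl | ⟨c', hac', hc'v⟩
    · exact Or.inr (hbc.tail hcv)
    · have hcc : c' = c := huniq hc'v hcv
      subst hcc
      exact ih hac'

lemma start_unique_s1 {S : V → V → Prop} (huniq : ∀ ⦃c c' v⦄, S c v → S c' v → c = c')
    {a b v : V} (hastart : ∀ u, ¬ S u a) (hbstart : ∀ u, ¬ S u b)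
    (ha : Relation.ReflTransGen S a v) (hb : Relation.ReflTransGen S b v) : a = b := by
  have key : ∀ {x y : V}, Relation.ReflTransGen S x y → (∀ u, ¬ S u y) → x = y := by
    intro x y hxy hy
    rcases Relation.ReflTransGen.cases_tail hxy with rfl | ⟨c, _, hcy⟩
    · rfl
    · exact absurd hcy (hy c)
  rcases reach_comp huniq ha hb with h | h
  · exact key h hbstart
  · exact (key h hastart).symm

end AuxLemmas


/-- Let `N` be a (finite) DAG. Then `N` is forest-based if and
only if `N` admits a leaf induced path partition. -/
theorem forestBased_iff_leafInducedPathPartition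
    {V : Type*} [Fintype V] (A : V → V → Prop) (hacy : Acyclic A) :
    ForestBased A ↔ ∃ P : Set (List V), IsLeafIPP A P := by
  classical
  constructor
  · -- Forward: forest-based ⟹ leaf induced path partition
    rintro ⟨F, hFA, ⟨hFacy, hFuniq⟩, hleaf, hcross⟩
    have hex : ∀ v, ¬ IsLeaf A v → ∃ w, F v w := by
      intro v hv
      by_contra h
      push_neg at h
      exact hv ((hleaf v).mp h)
    set next : V → Option V :=
      fun v => if h : IsLeaf A v then none else some (hex v h).choose with hnextdef
    have hnext_some : ∀ {v w}, next v = some w → F v w := by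
      intro v w h
      by_cases hv : IsLeaf A v
      · simp [hnextdef, hv] at h
      · simp [hnextdef, hv] at h
        exact h ▸ (hex v hv).choose_spec
    have hnext_none : ∀ {v}, next v = none ↔ IsLeaf A v := by
      intro v
      by_cases hv : IsLeaf A v <;> simp [hnextdef, hv]
    have hSA : ∀ {u v}, Step next u v → A u v := fun h => hFA (hnext_some h)
    have hwf : WellFounded (fun w v => next v = some w) :=
      Subrelation.wf (r := Function.swap A) (fun {w v} h => hSA h)
        (acyclic_wf (acyclic_flip hacy))
    have hwfS : WellFounded (Step next) :=
      Subrelation.wf (fun {u v} h => hSA h) (acyclic_wf hacy)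
    have huniqS : ∀ ⦃c c' v⦄, Step next c v → Step next c' v → c = c' :=
      fun c c' v h h' => hFuniq (hnext_some h) (hnext_some h')
    have exists_start : ∀ v : V, ∃ s, (∀ u, ¬ Step next u s) ∧
        Relation.ReflTransGen (Step next) s v := by
      intro v
      induction v using WellFounded.induction hwfS with
      | _ v ih =>
        by_cases hs : ∃ u, Step next u v
        · obtain ⟨u, hu⟩ := hs
          obtain ⟨s, hs1, hs2⟩ := ih u hu
          exact ⟨s, hs1, hs2.tail hu⟩
        · push_neg at hs
          exact ⟨v, hs, Relation.ReflTransGen.refl⟩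
    set P : Set (List V) :=
      { p | ∃ s, (∀ u, ¬ Step next u s) ∧ p = fwd next hwf s } with hPdef
    have hpathP : ∀ p ∈ P, IsPath A p := by
      rintro p ⟨s, -, rfl⟩
      have hc : (fwd next hwf s).Chain' A := (fwd_chain' s).imp fun _ _ h => hSA h
      exact ⟨fwd_ne_nil s, nodup_of_chain' hacy hc, hc⟩
    refine ⟨P, ⟨⟨⟨hpathP, ?_⟩, ?_⟩, ?_⟩⟩
    · -- existence & uniqueness of the path through each vertex
      intro v
      obtain ⟨s, hs1, hs2⟩ := exists_start v
      refine ⟨fwd next hwf s, ⟨⟨s, hs1, rfl⟩, mem_fwd.mpr hs2⟩, ?_⟩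
      rintro q ⟨⟨s', hs'1, rfl⟩, hvq⟩
      have hs'2 := mem_fwd.mp hvq
      rw [start_unique_s1 huniqS hs'1 hs1 hs'2 hs2]
    · -- each path ends at a leaf
      rintro p ⟨s, -, rfl⟩
      obtain ⟨x, hx1, hx2⟩ := fwd_getLast (next := next) (hwf := hwf) s
      exact ⟨x, hx1, hnext_none.mp hx2⟩
    · -- each path is induced
      rintro p ⟨s, hs1, rfl⟩
      refine ⟨hpathP _ ⟨s, hs1, rfl⟩, ?_⟩
      set p := fwd next hwf s with hpdef
      intro i j hij
      have hchS : p.Chain' (Step next) := fwd_chain' s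
      have hchA : p.Chain' A := hchS.imp fun _ _ h => hSA h
      rcases lt_trichotomy i j with hlt | heq | hgt
      · -- the real case: i < j, show j = i + 1
        have hmem : ∀ k : Fin p.length,
            Relation.ReflTransGen (Step next) s (p.get k) :=
          fun k => mem_fwd.mp (p.get_mem k)
        have hsymm : Symmetric (fun a b => F a b ∨ F b a) :=
          fun a b h => h.symm
        have hmono : ∀ k : Fin p.length,
            Relation.ReflTransGen (fun a b => F a b ∨ F b a) s (p.get k) :=
          fun k => Relation.ReflTransGen.mono (fun a b h => Or.inl (hnext_some h)) _ _ (hmem k)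
        have hund : UndirReach F (p.get i) (p.get j) :=
          Relation.ReflTransGen.trans
            (by haveI : Std.Symm (fun a b : V => F a b ∨ F b a) := ⟨hsymm⟩; exact Std.Symm.symm _ _ (hmono i)) (hmono j)
        have hFij : F (p.get i) (p.get j) := by
          by_contra hnF
          exact hcross _ _ hij hnF hund
        -- the predecessor of j on the path
        have hj1 : 1 ≤ (j : ℕ) := by
          have := i.2
          omega
        have hj' : (j : ℕ) - 1 < p.length - 1 := by
          have := j.2
          omega
        set j' : Fin p.length := ⟨(j : ℕ) - 1, by omega⟩ with hj'def
        have hstep : Step next (p.get j') (p.get j) := by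
          have : Step next (p.get ⟨(j : ℕ) - 1, by omega⟩) (p.get ⟨(j : ℕ) - 1 + 1, by omega⟩) :=
              List.isChain_iff_getElem.mp hchS ((j : ℕ) - 1) (by omega)
          have hjeq : (⟨(j : ℕ) - 1 + 1, by omega⟩ : Fin p.length) = j := by
            apply Fin.ext
            simp
            omega
          rwa [hjeq] at this
        have hFj' : F (p.get j') (p.get j) := hnext_some hstep
        have : p.get i = p.get j' := hFuniq hFij hFj'
        have hii : i = j' := ((nodup_of_chain' hacy hchA).get_inj_iff).mp this
        have : (i : ℕ) = (j : ℕ) - 1 := by rw [hii]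
        omega
      · exact absurd (Relation.TransGen.single (heq ▸ hij)) (hacy _)
      · exact absurd ((transGen_of_chain' hchA hgt).tail hij) (hacy _)
  · -- Backward: leaf induced path partition ⟹ forest-based
    rintro ⟨P, ⟨⟨⟨hpath, hpart⟩, hend⟩, hind⟩⟩
    set F : V → V → Prop := fun u v => ∃ p, p ∈ P ∧ ∃ i j : Fin p.length,
        p.get i = u ∧ p.get j = v ∧ (j : ℕ) = (i : ℕ) + 1 with hFdef
    have hFA : ∀ ⦃u v⦄, F u v → A u v := by
      rintro u v ⟨p, hp, i, j, rfl, rfl, hij⟩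
      have hc := (hpath p hp).2.2
      have h1 : (i : ℕ) < p.length - 1 := by
        have := j.2
        omega
      have : A (p.get ⟨(i : ℕ), by omega⟩) (p.get ⟨(i : ℕ) + 1, by omega⟩) :=
        List.isChain_iff_getElem.mp hc (i : ℕ) (by omega)
      have hieq : (⟨(i : ℕ), by omega⟩ : Fin p.length) = i := rfl
      have hjeq : (⟨(i : ℕ) + 1, by omega⟩ : Fin p.length) = j :=
        Fin.ext (by simp [hij])
      rwa [hieq, hjeq] at this
    have hpathOf : ∀ {u v p q}, p ∈ P → q ∈ P → u ∈ p → u ∈ q → v ∈ q → v ∈ p := by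
      intro u v p q hp hq hup huq hvq
      have : q = p := ((hpart u).unique ⟨hq, huq⟩ ⟨hp, hup⟩)
      exact this ▸ hvq
    refine ⟨F, hFA, ⟨?_, ?_⟩, ?_, ?_⟩
    · -- F acyclic
      intro v hv
      exact hacy v (Relation.TransGen.mono (fun _ _ h => hFA h) _ _ hv)
    · -- unique predecessors
      rintro u w v ⟨p, hp, i, j, hiu, hjv, hij⟩ ⟨q, hq, i', j', hiw, hj'v, hij'⟩
      have hpq : p = q :=
        (hpart v).unique ⟨hp, hjv ▸ p.get_mem j⟩ ⟨hq, hj'v ▸ q.get_mem j'⟩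
      subst hpq
      have hnd := (hpath p hp).2.1
      have hjj : j = j' := (hnd.get_inj_iff).mp (hjv.trans hj'v.symm)
      have hjj2 : (j : ℕ) = (j' : ℕ) := by rw [hjj]
      have hii : i = i' := Fin.ext (by omega)
      rw [← hiu, ← hiw, hii]
    · -- leaves coincide
      intro v
      constructor
      · intro hFv
        obtain ⟨p, hp, hv⟩ := (hpart v).exists
        obtain ⟨n, hn⟩ := List.mem_iff_get.mp hv
        by_cases hlt : (n : ℕ) + 1 < p.length
        · exact absurd ⟨p, hp, n, ⟨(n : ℕ) + 1, hlt⟩, hn, rfl, rfl⟩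
            (hFv (p.get ⟨(n : ℕ) + 1, hlt⟩))
        · obtain ⟨x, hx1, hx2⟩ := hend p hp
          have hne : p ≠ [] := (hpath p hp).1
          have hlast : p.getLast? = some (p.getLast hne) := List.getLast?_eq_getLast hne
          have hxv : x = p.getLast hne := by
            rw [hlast] at hx1
            exact (Option.some_injective V hx1).symm
          have hget : p.getLast hne = p.get ⟨p.length - 1, by
              have := List.length_pos_iff.mpr hne
              omega⟩ := List.getLast_eq_getElem hne
          have hnn : (n : ℕ) = p.length - 1 := by
            have := n.2
            omega
          have : p.getLast hne = v := by
            rw [hget, ← hn]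
            congr 1
            exact Fin.ext hnn.symm
          rwa [hxv, this] at hx2
      · intro hAv w hFw
        exact hAv w (hFA hFw)
    · -- cross arcs
      have hsame : ∀ {u v : V}, UndirReach F u v → ∀ p ∈ P, u ∈ p → v ∈ p := by
        intro u v h
        induction h with
        | refl => exact fun p _ hu => hu
        | @tail b c hab hbc ih =>
          intro p hp hu
          have hb : b ∈ p := ih p hp hu
          rcases hbc with hFbc | hFcb
          · obtain ⟨q, hq, i, j, hib, hjc, -⟩ := hFbc
            exact hpathOf hp hq hb (hib ▸ q.get_mem i) (hjc ▸ q.get_mem j)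
          · obtain ⟨q, hq, i, j, hic, hjb, -⟩ := hFcb
            exact hpathOf hp hq hb (hjb ▸ q.get_mem j) (hic ▸ q.get_mem i)
      intro u v hA hnF hund
      obtain ⟨p, hp, hu⟩ := (hpart u).exists
      have hv : v ∈ p := hsame hund p hp hu
      obtain ⟨i, hi⟩ := List.mem_iff_get.mp hu
      obtain ⟨j, hj⟩ := List.mem_iff_get.mp hv
      have := (hind p hp).2 i j (by rw [hi, hj]; exact hA)
      exact hnF ⟨p, hp, i, j, hi, hj, this⟩

end Paper
end

section
/- Let N be a DAG. Then N is weakly forest-based if and only if the bipartite graph G(N) has a matching of size |V(N)| - |L(N)|. -/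
/-!
Basic notions for finite directed acyclic graphs (DAGs), represented by an
adjacency (arc) relation `A` on a vertex type `V`.
-/

namespace Paper

variable {V : Type*}

/-- A matching of the bipartite graph `G(N)` associated to the digraph `A` on
`V`: the vertex classes `V₁, V₂` of `G(N)` are two copies of `V`, and its edges
`{u ∈ V₁, v ∈ V₂}` correspond bijectively to the arcs `(u, v)` of `A`.  A set
of pairwise disjoint edges of `G(N)` is thus the same as a set `M` of arcs of
`A` in which no two arcs share their tail and no two arcs share their head. -/
def IsBipMatching {V : Type*} (A M : V → V → Prop) : Prop :=
  (∀ ⦃u v⦄, M u v → A u v) ∧ (∀ ⦃u v w⦄, M u v → M u w → v = w) ∧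
    ∀ ⦃u v w⦄, M u v → M w v → u = w

/-- Let `N` be a (finite) DAG. Then `N` is weakly forest-based
if and only if the bipartite graph `G(N)` has a matching of size
`|V(N)| - |L(N)|`. -/
theorem weaklyForestBased_iff_matching
    {V : Type*} [Fintype V] (A : V → V → Prop) (hacy : Acyclic A) :
    WeaklyForestBased A ↔
      ∃ M : V → V → Prop, IsBipMatching A M ∧
        {e : V × V | M e.1 e.2}.ncard =
          Fintype.card V - {v : V | IsLeaf A v}.ncard := by
  classical
  have hcompl : {v : V | ¬ IsLeaf A v}.ncard =
      Fintype.card V - {v : V | IsLeaf A v}.ncard := by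
    have h := Set.ncard_add_ncard_compl {v : V | IsLeaf A v}
    have hc : ({v : V | IsLeaf A v}ᶜ : Set V) = {v : V | ¬ IsLeaf A v} := rfl
    rw [hc, Nat.card_eq_fintype_card] at h
    omega
  constructor
  · rintro ⟨F, hFA, ⟨hacyF, hindeg⟩, hleaf⟩
    have hex : ∀ u : {u : V // ¬ IsLeaf A u}, ∃ w, F (u : V) w := by
      rintro ⟨u, hu⟩
      by_contra hc
      push_neg at hc
      exact hu ((hleaf u).mp hc)
    choose f hf using hex
    set g : V → V := fun u => if h : ¬ IsLeaf A u then f ⟨u, h⟩ else u with hg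
    have hFg : ∀ u, ¬ IsLeaf A u → F u (g u) := by
      intro u hu
      simp only [hg, dif_pos hu]
      exact hf ⟨u, hu⟩
    refine ⟨fun u v => ¬ IsLeaf A u ∧ g u = v, ⟨?_, ?_, ?_⟩, ?_⟩
    · rintro u v ⟨hu, rfl⟩
      exact hFA (hFg u hu)
    · rintro u v w ⟨-, rfl⟩ ⟨-, rfl⟩; rfl
    · rintro u v w ⟨hu, rfl⟩ ⟨hw, hwv⟩
      exact hindeg (hFg u hu) (hwv ▸ hFg w hw)
    · have hset : {e : V × V | ¬ IsLeaf A e.1 ∧ g e.1 = e.2} =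
          (fun u => (u, g u)) '' {v : V | ¬ IsLeaf A v} := by
        ext ⟨a, b⟩
        constructor
        · rintro ⟨ha, hb⟩; exact ⟨a, ha, Prod.ext rfl hb⟩
        · rintro ⟨u, hu, heq⟩
          obtain ⟨rfl, hb⟩ := Prod.mk.injEq .. ▸ heq
          exact ⟨hu, hb⟩
      rw [hset, Set.ncard_image_of_injective _ (fun a b h => congrArg Prod.fst h),
        hcompl]
  · rintro ⟨M, ⟨hMA, htail, hhead⟩, hcard⟩
    set S : Set (V × V) := {e : V × V | M e.1 e.2} with hS
    have hinj : Set.InjOn Prod.fst S := by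
      rintro ⟨a, b⟩ hab ⟨c, d⟩ hcd (h : a = c)
      subst h
      exact Prod.ext rfl (htail hab hcd)
    have himg : (Prod.fst '' S).ncard = S.ncard := Set.ncard_image_of_injOn hinj
    have hsub : Prod.fst '' S ⊆ {v : V | ¬ IsLeaf A v} := by
      rintro u ⟨⟨a, b⟩, hab, rfl⟩
      exact fun hl => hl b (hMA hab)
    have heq : Prod.fst '' S = {v : V | ¬ IsLeaf A v} := by
      apply Set.eq_of_subset_of_ncard_le hsub _ (Set.toFinite _)
      rw [himg, hcard, hcompl]
    refine ⟨M, hMA, ⟨?_, fun u w v hu hw => hhead hu hw⟩, ?_⟩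
    · intro v hv
      exact hacy v (Relation.TransGen.mono (fun a b h => hMA h) _ _ hv)
    · intro v
      constructor
      · intro hv
        by_contra hl
        have : v ∈ Prod.fst '' S := heq ▸ hl
        obtain ⟨⟨a, b⟩, hab, rfl⟩ := this
        exact hv b hab
      · intro hl w hw
        exact hl w (hMA hw)

end Paper
end

section
/- Let N be a DAG, let v be a leaf of N, and let N' be the DAG obtained from N by adding a new vertex v' together with the single arc (v, v'). Then N admits a leaf induced path partition if and only if N' admits a leaf induced path partition. -/
/-!
Basic notions for finite directed acyclic graphs (DAGs), represented by an
adjacency (arc) relation `A` on a vertex type `V`.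
-/

namespace Paper

variable {V : Type*}

section Aux
variable {A : V → V → Prop} {v : V}

/-- The extension of `A` by a pendant leaf `none` attached below `v`. -/
def Ext (A : V → V → Prop) (v : V) : Option V → Option V → Prop :=
  fun a b => (∃ u w : V, a = some u ∧ b = some w ∧ A u w) ∨ (a = some v ∧ b = none)

lemma ext_some_some {a b : V} : Ext A v (some a) (some b) ↔ A a b := by
  simp [Ext]

lemma ext_none_not {b : Option V} : ¬ Ext A v none b := by
  simp [Ext]

lemma ext_to_none {a : Option V} : Ext A v a none ↔ a = some v := by
  cases a <;> simp [Ext]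

lemma isLeaf_ext_none : IsLeaf (Ext A v) none := fun _ h => ext_none_not h

lemma isLeaf_ext_some {w : V} : IsLeaf (Ext A v) (some w) ↔ IsLeaf A w ∧ w ≠ v := by
  constructor
  · intro h
    refine ⟨fun u hu => h (some u) (Or.inl ⟨w, u, rfl, rfl, hu⟩), ?_⟩
    rintro rfl
    exact h none (Or.inr ⟨rfl, rfl⟩)
  · rintro ⟨hl, hne⟩ b hb
    cases b with
    | none => exact hne (Option.some_injective _ (ext_to_none.mp hb))
    | some u => exact hl u (ext_some_some.mp hb)

lemma last_of_leaf_mem {α : Type*} {R : α → α → Prop} {l : List α} {x : α}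
    (hc : l.Chain' R) (hx : x ∈ l) (hl : IsLeaf R x) : l.getLast? = some x := by
  induction l with
  | nil => simp at hx
  | cons a t ih =>
    cases t with
    | nil => simp at hx; simp [hx]
    | cons b t' =>
      rcases List.mem_cons.mp hx with rfl | hx'
      · exact absurd (List.isChain_cons_cons.mp hc).1 (hl b)
      · have := ih (List.isChain_cons_cons.mp hc).2 hx'
        simpa [List.getLast?_cons_cons] using this

lemma last_or_arc {α : Type*} {R : α → α → Prop} {l : List α} {x : α}
    (hc : l.Chain' R) (hx : x ∈ l) : l.getLast? = some x ∨ ∃ b ∈ l, R x b := by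
  induction l with
  | nil => simp at hx
  | cons a t ih =>
    cases t with
    | nil => simp at hx; simp [hx]
    | cons b t' =>
      rcases List.mem_cons.mp hx with rfl | hx'
      · exact Or.inr ⟨b, by simp, (List.isChain_cons_cons.mp hc).1⟩
      · rcases ih (List.isChain_cons_cons.mp hc).2 hx' with h | ⟨c, hc1, hc2⟩
        · left; simpa [List.getLast?_cons_cons] using h
        · exact Or.inr ⟨c, List.mem_cons_of_mem _ hc1, hc2⟩

lemma induced_map_iff {q : List V} :
    IsInducedPath (Ext A v) (q.map some) ↔ IsInducedPath A q := by
  constructor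
  · rintro ⟨⟨h1, h2, h3⟩, hind⟩
    refine ⟨⟨by simpa using h1, h2.of_map _, ?_⟩, ?_⟩
    · exact ((List.isChain_map _).mp h3).imp fun a b h => ext_some_some.mp h
    · intro i j hij
      have hi : (i : ℕ) < (q.map some).length := by simpa using i.2
      have hj : (j : ℕ) < (q.map some).length := by simpa using j.2
      have := hind ⟨i, hi⟩ ⟨j, hj⟩ ?_
      · exact this
      · simp only [List.get_eq_getElem, List.getElem_map]
        exact ext_some_some.mpr (by simpa using hij)
  · rintro ⟨⟨h1, h2, h3⟩, hind⟩
    refine ⟨⟨by simpa using h1, h2.map (Option.some_injective V), ?_⟩, ?_⟩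
    · exact (List.isChain_map _).mpr (h3.imp fun a b h => ext_some_some.mpr h)
    · intro i j hij
      have hi : (i : ℕ) < q.length := by simpa using i.2
      have hj : (j : ℕ) < q.length := by simpa using j.2
      refine hind ⟨i, hi⟩ ⟨j, hj⟩ ?_
      apply ext_some_some.mp
      simpa only [List.get_eq_getElem, List.getElem_map] using hij

lemma get_extList {q : List V} (i : Fin (q.map some ++ [none]).length) :
    (q.map some ++ [none]).get i =
      if h : (i : ℕ) < q.length then some (q.get ⟨i, h⟩) else none := by
  have hlen : (q.map some ++ [none]).length = q.length + 1 := by simp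
  by_cases h : (i : ℕ) < q.length
  · rw [dif_pos h, List.get_eq_getElem,
      List.getElem_append_left (by simpa using h), List.getElem_map]
    simp
  · rw [dif_neg h, List.get_eq_getElem,
      List.getElem_append_right (by simpa using Nat.le_of_not_lt h)]
    simp

lemma induced_ext_append {q : List V} (hv : IsLeaf A v) (hq : IsInducedPath A q)
    (hlast : q.getLast? = some v) :
    IsInducedPath (Ext A v) (q.map some ++ [none]) := by
  obtain ⟨⟨hne, hnd, hch⟩, hind⟩ := hq
  have hpos : 0 < q.length := List.length_pos_iff.mpr hne
  have hvlast : ∀ i : Fin q.length, q.get i = v → (i : ℕ) + 1 = q.length := by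
    intro i hi
    have h1 : q.getLast? = some (q.get ⟨q.length - 1, by omega⟩) := by
      rw [List.getLast?_eq_getLast hne]
      congr 1
      rw [List.getLast_eq_getElem]; rfl
    have h2 : q.get i = q.get ⟨q.length - 1, by omega⟩ := by
      rw [hi]
      rw [hlast] at h1
      exact (Option.some_injective _ h1)
    have h3 := hnd.get_inj_iff.mp h2
    have h4 : (i : ℕ) = q.length - 1 := by
      simpa using congrArg Fin.val h3
    omega
  refine ⟨⟨by simp, ?_, ?_⟩, ?_⟩
  · refine List.nodup_append'.mpr ⟨hnd.map (Option.some_injective V), by simp, ?_⟩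
    intro a ha hb
    simp at hb
    subst hb
    simp at ha
  · change List.IsChain _ _; rw [List.isChain_append]
    refine ⟨(List.isChain_map _).mpr (hch.imp fun a b h => ext_some_some.mpr h),
      List.isChain_singleton _, ?_⟩
    intro x hx y hy
    simp at hy
    subst hy
    rw [List.getLast?_map, hlast] at hx
    simp at hx
    subst hx
    exact Or.inr ⟨rfl, rfl⟩
  · intro i j hij
    rw [get_extList i, get_extList j] at hij
    by_cases hi : (i : ℕ) < q.length
    · rw [dif_pos hi] at hij
      by_cases hj : (j : ℕ) < q.length
      · rw [dif_pos hj] at hij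
        exact hind ⟨i, hi⟩ ⟨j, hj⟩ (ext_some_some.mp hij)
      · rw [dif_neg hj] at hij
        have hgi : q.get ⟨i, hi⟩ = v :=
          Option.some_injective _ (ext_to_none.mp hij)
        have h5 : (i : ℕ) + 1 = q.length := hvlast ⟨i, hi⟩ hgi
        have hjlen : (j : ℕ) < q.length + 1 := by
          have h6 := j.2
          simp only [List.length_append, List.length_map, List.length_cons,
            List.length_nil, Nat.zero_add] at h6
          omega
        omega
    · rw [dif_neg hi] at hij
      exact absurd hij ext_none_not

lemma of_induced_ext {q : List V} (hne' : q ≠ [])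
    (h : IsInducedPath (Ext A v) (q.map some ++ [none])) :
    IsInducedPath A q ∧ q.getLast? = some v := by
  obtain ⟨⟨hne, hnd, hch⟩, hind⟩ := h
  change List.IsChain _ _ at hch; rw [List.isChain_append] at hch
  obtain ⟨hch1, -, hjun⟩ := hch
  constructor
  · refine ⟨⟨hne', ((List.nodup_append'.mp hnd).1).of_map _, ?_⟩, ?_⟩
    · exact ((List.isChain_map _).mp hch1).imp fun a b hab => ext_some_some.mp hab
    · intro i j hij
      have hi : (i : ℕ) < (q.map some ++ [none]).length := by
        have := i.2; simp
      have hj : (j : ℕ) < (q.map some ++ [none]).length := by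
        have := j.2; simp
      have := hind ⟨i, hi⟩ ⟨j, hj⟩ ?_
      · exact this
      · rw [get_extList, get_extList]
        rw [dif_pos (show ((⟨(i:ℕ), hi⟩ : Fin _) : ℕ) < q.length from i.2)]
        rw [dif_pos (show ((⟨(j:ℕ), hj⟩ : Fin _) : ℕ) < q.length from j.2)]
        exact ext_some_some.mpr hij
  · have hml : (q.map some).getLast? = some (some (q.getLast hne')) := by
      rw [List.getLast?_map, List.getLast?_eq_getLast hne']
      rfl
    have h2 := hjun (some (q.getLast hne')) (by rw [hml]; rfl) none rfl
    have h3 : q.getLast hne' = v := Option.some_injective _ (ext_to_none.mp h2)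
    rw [List.getLast?_eq_getLast hne', h3]

lemma no_none_eq {l : List (Option V)} (h : none ∉ l) :
    (l.filterMap id).map some = l := by
  induction l with
  | nil => simp
  | cons a t ih =>
    cases a with
    | none => exact absurd (List.mem_cons_self) h
    | some x =>
      have ht := ih (fun hc => h (List.mem_cons_of_mem _ hc))
      simp [List.filterMap_cons]; exact ht

lemma with_none_eq {l : List (Option V)} (hnd : l.Nodup) (hlast : l.getLast? = some none) :
    l = (l.filterMap id).map some ++ [none] := by
  have hne : l ≠ [] := by rintro rfl; simp at hlast
  have h1 : l.getLast hne = none := by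
    rw [List.getLast?_eq_getLast hne] at hlast
    exact Option.some_injective _ hlast
  have h2 : l.dropLast ++ [none] = l := by
    rw [← h1]; exact List.dropLast_append_getLast hne
  have hnone : none ∉ l.dropLast := by
    rw [← h2] at hnd
    intro hc
    exact (List.nodup_append'.mp hnd).2.2 hc (by simp)
  have h3 : (l.dropLast.filterMap id).map some = l.dropLast := no_none_eq hnone
  have h4 : l.filterMap id = l.dropLast.filterMap id := by
    conv_lhs => rw [← h2]
    rw [List.filterMap_append]
    simp
  rw [h4, h3, h2]

end Aux

/-- Let `N` be a (finite) DAG, let `v` be a leaf of `N`, and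
let `N'` be the DAG obtained from `N` by adding a new vertex `v'` together with
the single arc `(v, v')`.  (Here `N'` lives on `Option V`, the new vertex being
`none`.)  Then `N` admits a leaf induced path partition if and only if `N'`
does. -/
theorem leafIPP_iff_addPendantLeaf
    {V : Type*} [Fintype V] (A : V → V → Prop) (hacy : Acyclic A)
    (v : V) (hv : IsLeaf A v) :
    (∃ P : Set (List V), IsLeafIPP A P) ↔
      ∃ P : Set (List (Option V)),
        IsLeafIPP (fun a b : Option V =>
          (∃ u w : V, a = some u ∧ b = some w ∧ A u w) ∨
            (a = some v ∧ b = none)) P := by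
  classical
  show (∃ P : Set (List V), IsLeafIPP A P) ↔
      ∃ P : Set (List (Option V)), IsLeafIPP (Ext A v) P
  constructor
  · rintro ⟨P, ⟨⟨⟨hPath, hUniq⟩, hLeaf⟩, hInd⟩⟩
    set f : List V → List (Option V) :=
      fun q => q.map some ++ if v ∈ q then [none] else [] with hf
    have hmem_some : ∀ (q : List V) (u : V), some u ∈ f q ↔ u ∈ q := by
      intro q u
      by_cases h : v ∈ q <;> simp [hf, h]
    have hmem_none : ∀ q : List V, none ∈ f q ↔ v ∈ q := by
      intro q
      by_cases h : v ∈ q <;> simp [hf, h]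
    have hlastv : ∀ q ∈ P, v ∈ q → q.getLast? = some v :=
      fun q hq hvq => last_of_leaf_mem (hPath q hq).2.2 hvq hv
    have hfind : ∀ q ∈ P, IsInducedPath (Ext A v) (f q) := by
      intro q hq
      by_cases h : v ∈ q
      · simp only [hf, if_pos h]
        exact induced_ext_append hv (hInd q hq) (hlastv q hq h)
      · simp only [hf, if_neg h, List.append_nil]
        exact induced_map_iff.mpr (hInd q hq)
    refine ⟨f '' P, ⟨⟨⟨?_, ?_⟩, ?_⟩, ?_⟩⟩
    · rintro p ⟨q, hq, rfl⟩
      exact (hfind q hq).1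
    · intro a
      cases a with
      | none =>
        obtain ⟨q, ⟨hq, hvq⟩, hu⟩ := hUniq v
        refine ⟨f q, ⟨⟨q, hq, rfl⟩, (hmem_none q).mpr hvq⟩, ?_⟩
        rintro p ⟨⟨q2, hq2, rfl⟩, hm⟩
        rw [hu q2 ⟨hq2, (hmem_none q2).mp hm⟩]
      | some u =>
        obtain ⟨q, ⟨hq, huq⟩, hu⟩ := hUniq u
        refine ⟨f q, ⟨⟨q, hq, rfl⟩, (hmem_some q u).mpr huq⟩, ?_⟩
        rintro p ⟨⟨q2, hq2, rfl⟩, hm⟩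
        rw [hu q2 ⟨hq2, (hmem_some q2 u).mp hm⟩]
    · rintro p ⟨q, hq, rfl⟩
      by_cases h : v ∈ q
      · refine ⟨none, ?_, isLeaf_ext_none⟩
        simp only [hf, if_pos h]
        exact List.getLast?_concat
      · obtain ⟨x, hx1, hx2⟩ := hLeaf q hq
        have hxq : x ∈ q := by
          have hne : q ≠ [] := (hPath q hq).1
          rw [List.getLast?_eq_getLast hne] at hx1
          have : x = q.getLast hne := (Option.some_injective _ hx1.symm)
          rw [this]
          exact List.getLast_mem hne
        refine ⟨some x, ?_, isLeaf_ext_some.mpr ⟨hx2, fun hxv => h (hxv ▸ hxq)⟩⟩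
        simp only [hf, if_neg h, List.append_nil, List.getLast?_map, hx1]
        rfl
    · rintro p ⟨q, hq, rfl⟩
      exact hfind q hq
  · rintro ⟨P', ⟨⟨⟨hPath, hUniq⟩, hLeaf⟩, hInd⟩⟩
    have hlast_none : ∀ q' ∈ P', none ∈ q' → q'.getLast? = some none :=
      fun q' hq' hn => last_of_leaf_mem (hPath q' hq').2.2 hn isLeaf_ext_none
    have hstruct : ∀ q' ∈ P', (none ∉ q' ∧ q' = (q'.filterMap id).map some) ∨
        q' = (q'.filterMap id).map some ++ [none] := by
      intro q' hq'
      by_cases hn : none ∈ q'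
      · exact Or.inr (with_none_eq (hPath q' hq').2.1 (hlast_none q' hq' hn))
      · exact Or.inl ⟨hn, (no_none_eq hn).symm⟩
    have hne_single : ∀ q' ∈ P', q' ≠ [none] := by
      intro q' hq' hq
      obtain ⟨p, ⟨hp, hvp⟩, -⟩ := hUniq (some v)
      have hpne : p ≠ q' := by
        rintro rfl
        rw [hq] at hvp
        simp at hvp
      rcases last_or_arc (hPath p hp).2.2 hvp with hl | ⟨b, hb, hab⟩
      · obtain ⟨x, hx1, hx2⟩ := hLeaf p hp
        rw [hl] at hx1
        have hx : x = some v := Option.some_injective _ hx1.symm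
        subst hx
        exact (isLeaf_ext_some.mp hx2).2 rfl
      · rcases hab with ⟨u, w, hu, hw, haw⟩ | ⟨-, hbnone⟩
        · have : u = v := (Option.some_injective _ hu.symm)
          exact hv w (this ▸ haw)
        · subst hbnone
          obtain ⟨r, hr, hru⟩ := hUniq none
          have e1 := hru p ⟨hp, hb⟩
          have e2 := hru q' ⟨hq', by rw [hq]; simp⟩
          exact hpne (e1.trans e2.symm)
    have hqne : ∀ q' ∈ P', q' = (q'.filterMap id).map some ++ [none] →
        q'.filterMap id ≠ [] := by
      intro q' hq' he h0
      rw [h0] at he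
      simp at he
      exact hne_single q' hq' he
    have hkey : ∀ q' ∈ P', IsInducedPath A (q'.filterMap id) := by
      intro q' hq'
      rcases hstruct q' hq' with ⟨hn, he⟩ | he
      · have h := hInd q' hq'
        rw [he] at h
        exact induced_map_iff.mp h
      · have h := hInd q' hq'
        rw [he] at h
        exact (of_induced_ext (hqne q' hq' he) h).1
    have hkey_last : ∀ q' ∈ P', EndsAtLeaf A (q'.filterMap id) := by
      intro q' hq'
      rcases hstruct q' hq' with ⟨hn, he⟩ | he
      · obtain ⟨x, hx1, hx2⟩ := hLeaf q' hq'
        rw [he, List.getLast?_map] at hx1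
        cases hqq : (q'.filterMap id).getLast? with
        | none => rw [hqq] at hx1; simp at hx1
        | some y =>
          rw [hqq] at hx1
          simp only [Option.map_some] at hx1
          have hxy : x = some y := Option.some_injective _ hx1.symm
          subst hxy
          exact ⟨y, hqq, (isLeaf_ext_some.mp hx2).1⟩
      · have h := hInd q' hq'
        rw [he] at h
        exact ⟨v, (of_induced_ext (hqne q' hq' he) h).2, hv⟩
    refine ⟨(fun q' => q'.filterMap id) '' P', ⟨⟨⟨?_, ?_⟩, ?_⟩, ?_⟩⟩
    · rintro p ⟨q', hq', rfl⟩
      exact (hkey q' hq').1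
    · intro u
      obtain ⟨q', ⟨hq', hu⟩, huniq⟩ := hUniq (some u)
      refine ⟨q'.filterMap id, ⟨⟨q', hq', rfl⟩, List.mem_filterMap.mpr ⟨some u, hu, rfl⟩⟩, ?_⟩
      rintro p ⟨⟨r, hr, rfl⟩, hup⟩
      have hsome : some u ∈ r := by
        obtain ⟨a, ha, hae⟩ := List.mem_filterMap.mp hup
        simp only [id] at hae
        subst hae
        exact ha
      rw [huniq r ⟨hr, hsome⟩]
    · rintro p ⟨q', hq', rfl⟩
      exact hkey_last q' hq'
    · rintro p ⟨q', hq', rfl⟩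
      exact hkey q' hq'


end Paper
end

section
/- Let N be a DAG with two distinct roots r_1 and r_2, and let N' be the DAG obtained from N by adding a new vertex r together with the two arcs (r, r_1) and (r, r_2). Then N admits a leaf induced path partition if and only if N' admits a leaf induced path partition. -/
/-!
Basic notions for finite directed acyclic graphs (DAGs), represented by an
adjacency (arc) relation `A` on a vertex type `V`.
-/

namespace Paper

variable {V : Type*}

private lemma head?_of_no_pred {A : V → V → Prop} : ∀ {p : List V}, p.Chain' A →
    ∀ {x : V}, x ∈ p → (∀ y, ¬ A y x) → p.head? = some x
  | [], _, _, hx, _ => absurd hx List.not_mem_nil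
  | a :: t, hc, x, hx, hr => by
    rcases List.mem_cons.1 hx with rfl | hx'
    · rfl
    · have ht : t.head? = some x := head?_of_no_pred hc.tail hx' hr
      match t, ht, hc with
      | b :: t', ht, hc =>
        have hb : b = x := by simpa using ht
        subst hb
        exact absurd (List.isChain_cons_cons.1 hc).1 (hr a)

private lemma eq_map_filterMap {q : List (Option V)} (h : none ∉ q) :
    q = (q.filterMap id).map some := by
  induction q with
  | nil => rfl
  | cons a t ih =>
    cases a with
    | none => exact absurd (List.mem_cons_self) h
    | some x =>
      have h' : none ∉ t := fun ht => h (List.mem_cons_of_mem _ ht)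
      simpa using ih h'

private lemma isPath_map {A : V → V → Prop} {B : Option V → Option V → Prop}
    (hB : ∀ u w : V, B (some u) (some w) ↔ A u w) {s : List V} :
    IsPath B (s.map some) ↔ IsPath A s := by
  unfold IsPath
  unfold List.Chain'; rw [List.isChain_map]
  simp only [ne_eq, List.map_eq_nil_iff, List.nodup_map_iff (Option.some_injective V)]
  constructor
  · rintro ⟨h1, h2, h3⟩
    exact ⟨h1, h2, h3.imp fun a b h => (hB a b).1 h⟩
  · rintro ⟨h1, h2, h3⟩
    exact ⟨h1, h2, h3.imp fun a b h => (hB a b).2 h⟩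

private lemma isInducedPath_map {A : V → V → Prop} {B : Option V → Option V → Prop}
    (hB : ∀ u w : V, B (some u) (some w) ↔ A u w) {s : List V} :
    IsInducedPath B (s.map some) ↔ IsInducedPath A s := by
  unfold IsInducedPath
  rw [isPath_map hB]
  refine and_congr_right fun _ => ?_
  constructor
  · intro h i j hij
    have hi : (i : ℕ) < (s.map some).length := by simpa using i.2
    have hj : (j : ℕ) < (s.map some).length := by simpa using j.2
    have := h ⟨i, hi⟩ ⟨j, hj⟩ (by
      simp only [List.get_eq_getElem, List.getElem_map]
      exact (hB _ _).2 (by simpa [List.get_eq_getElem] using hij))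
    simpa using this
  · intro h i j hij
    have hi : (i : ℕ) < s.length := by simpa using i.2
    have hj : (j : ℕ) < s.length := by simpa using j.2
    have := h ⟨i, hi⟩ ⟨j, hj⟩ (by
      have := hij
      simp only [List.get_eq_getElem, List.getElem_map] at this
      rw [hB] at this
      simpa [List.get_eq_getElem] using this)
    simpa using this

private lemma endsAtLeaf_map {A : V → V → Prop} {B : Option V → Option V → Prop}
    (hleaf : ∀ x : V, IsLeaf B (some x) ↔ IsLeaf A x) {s : List V} :
    EndsAtLeaf B (s.map some) ↔ EndsAtLeaf A s := by
  unfold EndsAtLeaf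
  rw [List.getLast?_map]
  constructor
  · rintro ⟨x, hx, hlx⟩
    cases hg : s.getLast? with
    | none => rw [hg] at hx; simp at hx
    | some y =>
      rw [hg] at hx
      have : x = some y := by simpa using hx.symm
      subst this
      exact ⟨y, rfl, (hleaf y).1 hlx⟩
  · rintro ⟨x, hx, hlx⟩
    exact ⟨some x, by rw [hx]; rfl, (hleaf x).2 hlx⟩

set_option maxHeartbeats 1000000 in
/-- Let `N` be a (finite) DAG with two distinct roots `r₁` and
`r₂`, and let `N'` be the DAG obtained from `N` by adding a new vertex `r`
together with the two arcs `(r, r₁)` and `(r, r₂)`.  (Here `N'` lives on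
`Option V`, the new vertex `r` being `none`.)  Then `N` admits a leaf induced
path partition if and only if `N'` does. -/
theorem leafIPP_iff_addRoot
    {V : Type*} [Fintype V] (A : V → V → Prop) (hacy : Acyclic A)
    (r₁ r₂ : V) (hne : r₁ ≠ r₂) (h₁ : IsRoot A r₁) (h₂ : IsRoot A r₂) :
    (∃ P : Set (List V), IsLeafIPP A P) ↔
      ∃ P : Set (List (Option V)),
        IsLeafIPP (fun a b : Option V =>
          (∃ u w : V, a = some u ∧ b = some w ∧ A u w) ∨
            (a = none ∧ (b = some r₁ ∨ b = some r₂))) P := by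
  set A' : Option V → Option V → Prop := fun a b =>
    (∃ u w : V, a = some u ∧ b = some w ∧ A u w) ∨
      (a = none ∧ (b = some r₁ ∨ b = some r₂)) with hA'
  have hss : ∀ u w : V, A' (some u) (some w) ↔ A u w := by
    intro u w
    constructor
    · rintro (⟨u', w', hu, hw, h⟩ | ⟨h0, _⟩)
      · cases hu; cases hw; exact h
      · simp at h0
    · intro h; exact Or.inl ⟨u, w, rfl, rfl, h⟩
  have hnone_pred : ∀ y, ¬ A' y none := by
    rintro y (⟨u, w, _, hw, _⟩ | ⟨_, hw | hw⟩) <;> simp_all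
  have hleaf : ∀ x : V, IsLeaf A' (some x) ↔ IsLeaf A x := by
    intro x
    constructor
    · intro h w hw; exact h (some w) ((hss x w).2 hw)
    · rintro h b (⟨u, w, hu, hw, haw⟩ | ⟨h0, _⟩)
      · cases hu; cases hw; exact h _ haw
      · simp at h0
  have hr1 : A' none (some r₁) := Or.inr ⟨rfl, Or.inl rfl⟩
  constructor
  · rintro ⟨P, ⟨⟨hpath, hpart⟩, hleafend⟩, hindP⟩
    obtain ⟨p₀, ⟨hp₀P, hr₁p₀⟩, hp₀uniq⟩ := hpart r₁
    have hp₀head : p₀.head? = some r₁ :=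
      head?_of_no_pred (hpath _ hp₀P).2.2 hr₁p₀ h₁
    have hr₂p₀ : r₂ ∉ p₀ := by
      intro hmem
      have := head?_of_no_pred (hpath _ hp₀P).2.2 hmem h₂
      rw [hp₀head] at this
      exact hne (by simpa using this)
    obtain ⟨a, t₀, hpc⟩ := List.exists_cons_of_ne_nil (hpath _ hp₀P).1
    have har : a = r₁ := by rw [hpc] at hp₀head; simpa using hp₀head
    -- the special path
    have hconsPath : IsPath A' (none :: p₀.map some) := by
      refine ⟨by simp, ?_, ?_⟩
      · rw [List.nodup_cons]
        exact ⟨by simp, ((isPath_map hss).2 (hpath _ hp₀P)).2.1⟩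
      · unfold List.Chain'; rw [List.isChain_cons]
        refine ⟨?_, ((isPath_map hss).2 (hpath _ hp₀P)).2.2⟩
        intro y hy
        rw [hpc] at hy
        have : some r₁ = y := by simpa [har] using hy
        subst this
        exact hr1
    have hconsLeaf : EndsAtLeaf A' (none :: p₀.map some) := by
      obtain ⟨x, hx, hlx⟩ := (endsAtLeaf_map hleaf).2 (hleafend _ hp₀P)
      refine ⟨x, ?_, hlx⟩
      rw [hpc, List.map_cons, List.getLast?_cons_cons, ← List.map_cons, ← hpc]
      exact hx
    have hconsInd : IsInducedPath A' (none :: p₀.map some) := by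
      refine ⟨hconsPath, ?_⟩
      intro i j harc
      obtain ⟨i, hi⟩ := i
      obtain ⟨j, hj⟩ := j
      simp only [List.get_eq_getElem] at harc ⊢
      simp only [List.length_cons, List.length_map] at hi hj
      cases i with
      | zero =>
        cases j with
        | zero =>
          exfalso
          simp only [List.getElem_cons_zero] at harc
          exact hnone_pred none harc
        | succ j =>
          have hj' : j < p₀.length := by omega
          simp only [List.getElem_cons_zero, List.getElem_cons_succ,
            List.getElem_map] at harc
          rcases harc with ⟨u, w, hu, _, _⟩ | ⟨_, h | h⟩
          · exact absurd hu (by simp)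
          · have hpj : p₀[j] = r₁ := by simpa using h
            have h0 : 0 < p₀.length := by omega
            have hp0 : p₀[0]'h0 = r₁ := by
              simp only [hpc, List.getElem_cons_zero]; exact har
            have hnd := (hpath _ hp₀P).2.1
            have : j = 0 := (hnd.getElem_inj_iff (hi := hj') (hj := h0)).1
              (by rw [hpj, hp0])
            omega
          · exfalso
            have hpj : p₀[j] = r₂ := by simpa using h
            exact hr₂p₀ (hpj ▸ List.getElem_mem hj')
      | succ i =>
        cases j with
        | zero =>
          exfalso
          simp only [List.getElem_cons_succ, List.getElem_cons_zero,
            List.getElem_map] at harc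
          exact hnone_pred _ harc
        | succ j =>
          have hi' : i < p₀.length := by omega
          have hj' : j < p₀.length := by omega
          simp only [List.getElem_cons_succ, List.getElem_map] at harc
          have hA := (hss _ _).1 harc
          have := (hindP _ hp₀P).2 ⟨i, hi'⟩ ⟨j, hj'⟩
            (by simpa [List.get_eq_getElem] using hA)
          simp only at this
          omega
    refine ⟨insert (none :: p₀.map some) {q | ∃ s ∈ P, s ≠ p₀ ∧ q = s.map some},
      ⟨⟨⟨?_, ?_⟩, ?_⟩, ?_⟩⟩
    · intro q hq
      rcases Set.mem_insert_iff.1 hq with rfl | ⟨s, hs, _, rfl⟩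
      · exact hconsPath
      · exact (isPath_map hss).2 (hpath _ hs)
    · intro v
      cases v with
      | none =>
        refine ⟨none :: p₀.map some, ⟨Set.mem_insert _ _, List.mem_cons_self⟩, ?_⟩
        rintro q ⟨hq, hmem⟩
        rcases Set.mem_insert_iff.1 hq with rfl | ⟨s, hs, _, rfl⟩
        · rfl
        · exfalso; simp at hmem
      | some v =>
        obtain ⟨p, ⟨hpP, hvp⟩, hpuniq⟩ := hpart v
        by_cases hpp : p = p₀
        · subst hpp
          refine ⟨none :: p.map some, ⟨Set.mem_insert _ _,
            List.mem_cons_of_mem _ (List.mem_map_of_mem (f := some) hvp)⟩, ?_⟩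
          rintro q ⟨hq, hmem⟩
          rcases Set.mem_insert_iff.1 hq with rfl | ⟨s, hs, hsne, rfl⟩
          · rfl
          · exfalso
            have hvs : v ∈ s := by simpa using hmem
            exact hsne (hpuniq s ⟨hs, hvs⟩)
        · refine ⟨p.map some, ⟨Set.mem_insert_of_mem _ ⟨p, hpP, hpp, rfl⟩,
            List.mem_map_of_mem (f := some) hvp⟩, ?_⟩
          rintro q ⟨hq, hmem⟩
          rcases Set.mem_insert_iff.1 hq with rfl | ⟨s, hs, hsne, rfl⟩
          · exfalso
            have hvs : v ∈ p₀ := by simpa using hmem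
            exact hpp (hpuniq p₀ ⟨hp₀P, hvs⟩).symm
          · have hvs : v ∈ s := by simpa using hmem
            rw [hpuniq s ⟨hs, hvs⟩]
    · intro q hq
      rcases Set.mem_insert_iff.1 hq with rfl | ⟨s, hs, _, rfl⟩
      · exact hconsLeaf
      · exact (endsAtLeaf_map hleaf).2 (hleafend _ hs)
    · intro q hq
      rcases Set.mem_insert_iff.1 hq with rfl | ⟨s, hs, _, rfl⟩
      · exact hconsInd
      · exact (isInducedPath_map hss).2 (hindP _ hs)
  · rintro ⟨P', ⟨⟨hpath, hpart⟩, hleafend⟩, hindP⟩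
    obtain ⟨q₀, ⟨hq₀P, hnq₀⟩, hq₀uniq⟩ := hpart none
    have hq₀head : q₀.head? = some none :=
      head?_of_no_pred (hpath _ hq₀P).2.2 hnq₀ hnone_pred
    obtain ⟨a, t, hq₀c⟩ := List.exists_cons_of_ne_nil (hpath _ hq₀P).1
    have han : a = none := by rw [hq₀c] at hq₀head; simpa using hq₀head
    subst han
    have hnone_t : none ∉ t := by
      have := (hpath _ hq₀P).2.1
      rw [hq₀c] at this
      exact (List.nodup_cons.1 this).1
    have ht : t = (t.filterMap id).map some := eq_map_filterMap hnone_t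
    set s₀ := t.filterMap id with hs₀def
    have ht_ne : t ≠ [] := by
      intro h
      obtain ⟨x, hx, hlx⟩ := hleafend _ hq₀P
      rw [hq₀c, h] at hx
      have : none = x := by simpa using hx
      subst this
      exact hlx (some r₁) hr1
    have hs₀ne : s₀ ≠ [] := by
      intro h
      rw [h] at ht
      simp only [List.map_nil] at ht
      exact ht_ne ht
    have hq₀eq : q₀ = none :: s₀.map some := by rw [hq₀c, ← ht]
    have hmapPath : IsPath A' (s₀.map some) := by
      obtain ⟨_, hnd, hch⟩ := hpath _ hq₀P
      rw [hq₀eq] at hnd hch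
      exact ⟨by simpa using hs₀ne, (List.nodup_cons.1 hnd).2, hch.tail⟩
    have hs₀path : IsPath A s₀ := (isPath_map hss).1 hmapPath
    have hs₀ind : IsInducedPath A s₀ := by
      refine ⟨hs₀path, ?_⟩
      intro i j hij
      have hq := hindP _ hq₀P
      rw [hq₀eq] at hq
      have hlen : (none :: s₀.map some).length = s₀.length + 1 := by simp
      have hi : (i : ℕ) + 1 < (none :: s₀.map some).length := by rw [hlen]; omega
      have hj : (j : ℕ) + 1 < (none :: s₀.map some).length := by rw [hlen]; omega
      have := hq.2 ⟨(i : ℕ) + 1, hi⟩ ⟨(j : ℕ) + 1, hj⟩ (by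
        simp only [List.get_eq_getElem, List.getElem_cons_succ, List.getElem_map]
        exact (hss _ _).2 (by simpa [List.get_eq_getElem] using hij))
      simp only at this
      omega
    have hs₀leaf : EndsAtLeaf A s₀ := by
      refine (endsAtLeaf_map hleaf).1 ?_
      obtain ⟨x, hx, hlx⟩ := hleafend _ hq₀P
      refine ⟨x, ?_, hlx⟩
      rw [hq₀eq] at hx
      obtain ⟨b, l, hbl⟩ := List.exists_cons_of_ne_nil
        (show s₀.map some ≠ [] by simpa using hs₀ne)
      rw [hbl, List.getLast?_cons_cons] at hx
      rw [hbl]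
      exact hx
    refine ⟨insert s₀ {s | s.map some ∈ P'}, ⟨⟨⟨?_, ?_⟩, ?_⟩, ?_⟩⟩
    · intro s hs
      rcases Set.mem_insert_iff.1 hs with rfl | hs
      · exact hs₀path
      · exact (isPath_map hss).1 (hpath _ hs)
    · intro v
      obtain ⟨q, ⟨hqP, hvq⟩, hquniq⟩ := hpart (some v)
      by_cases hq : none ∈ q
      · have hqq₀ : q = q₀ := hq₀uniq q ⟨hqP, hq⟩
        subst hqq₀
        have hvs₀ : v ∈ s₀ := by
          rw [hq₀eq] at hvq
          rcases List.mem_cons.1 hvq with h | h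
          · exact absurd h (by simp)
          · simpa using h
        refine ⟨s₀, ⟨Set.mem_insert _ _, hvs₀⟩, ?_⟩
        rintro s ⟨hsmem, hvs⟩
        rcases Set.mem_insert_iff.1 hsmem with rfl | hs
        · rfl
        · exfalso
          have heq : s.map some = q :=
            hquniq _ ⟨hs, List.mem_map_of_mem (f := some) hvs⟩
          have : none ∈ s.map some := by
            rw [heq, hq₀eq]; exact List.mem_cons_self
          simp at this
      · have hqm : q = (q.filterMap id).map some := eq_map_filterMap hq
        refine ⟨q.filterMap id, ⟨Set.mem_insert_of_mem _ (by
            show (q.filterMap id).map some ∈ P'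
            rw [← hqm]; exact hqP), ?_⟩, ?_⟩
        · rw [hqm] at hvq
          simpa using hvq
        · rintro s ⟨hsmem, hvs⟩
          rcases Set.mem_insert_iff.1 hsmem with rfl | hs
          · exfalso
            have hvq₀ : some v ∈ q₀ := by
              rw [hq₀eq]
              exact List.mem_cons_of_mem _ (List.mem_map_of_mem (f := some) hvs)
            have heq : q₀ = q := hquniq _ ⟨hq₀P, hvq₀⟩
            exact hq (heq ▸ (hq₀eq ▸ List.mem_cons_self : none ∈ q₀))
          · have heq : s.map some = q :=
              hquniq _ ⟨hs, List.mem_map_of_mem (f := some) hvs⟩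
            have : s.map some = (q.filterMap id).map some := by rw [heq, ← hqm]
            exact List.map_injective_iff.2 (Option.some_injective V) this
    · intro s hs
      rcases Set.mem_insert_iff.1 hs with rfl | hs
      · exact hs₀leaf
      · exact (endsAtLeaf_map hleaf).1 (hleafend _ hs)
    · intro s hs
      rcases Set.mem_insert_iff.1 hs with rfl | hs
      · exact hs₀ind
      · exact (isInducedPath_map hss).1 (hindP _ hs)

end Paper
end

section
/- Every reducible DAG admits a leaf induced path partition. -/
/-!
Finite directed acyclic graphs (DAGs) whose vertex set may shrink under
cherry-picking operations are represented by a pair consisting of a vertex set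
`s : Set U` inside an ambient type `U` and an arc relation `A : U → U → Prop`
supported on `s`.
-/

namespace Paper

variable {U : Type*}

/-- `(s, A)` is a finite DAG: the vertex set is finite, arcs join vertices of
`s`, and there is no directed cycle. -/
def IsDag (s : Set U) (A : U → U → Prop) : Prop :=
  s.Finite ∧ (∀ ⦃u v⦄, A u v → u ∈ s ∧ v ∈ s) ∧ ∀ v, ¬ Relation.TransGen A v v

/-- A leaf of `(s, A)`: a vertex of outdegree 0. -/
def DLeaf (s : Set U) (A : U → U → Prop) (v : U) : Prop :=
  v ∈ s ∧ ∀ w, ¬ A v w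

/-- A subdivision vertex of `(s, A)`: indegree 1 and outdegree 1. -/
def IsSubdiv (s : Set U) (A : U → U → Prop) (v : U) : Prop :=
  v ∈ s ∧ (∃! w, A w v) ∧ (∃! w, A v w)

/-- A reticulation of `(s, A)`: a non-leaf vertex of indegree ≥ 2. -/
def Retic (s : Set U) (A : U → U → Prop) (v : U) : Prop :=
  v ∈ s ∧ (∃ w, A v w) ∧ ∃ u w, u ≠ w ∧ A u v ∧ A w v

/-- `SuppressIf s A w s' A'` holds when `(s', A')` is obtained from `(s, A)` by
suppressing the vertex `w` in case it is a subdivision vertex (deleting it and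
adding an arc from its unique in-neighbor to its unique out-neighbor), and by
doing nothing otherwise. -/
def SuppressIf (s : Set U) (A : U → U → Prop) (w : U)
    (s' : Set U) (A' : U → U → Prop) : Prop :=
  (¬ IsSubdiv s A w ∧ s' = s ∧ A' = A) ∨
    (IsSubdiv s A w ∧ ∃ z o, A z w ∧ A w o ∧ s' = s \ {w} ∧
      A' = fun a b => (A a b ∧ a ≠ w ∧ b ≠ w) ∨ (a = z ∧ b = o))

/-- A standard cherry: a pair of distinct leaves with a common in-neighbor. -/
def StandardCherry (s : Set U) (A : U → U → Prop) (x y : U) : Prop :=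
  x ≠ y ∧ DLeaf s A x ∧ DLeaf s A y ∧ ∃ w, A w x ∧ A w y

/-- A reticulated cherry: a pair `(x, y)` of distinct leaves whose respective
in-neighbors `x', y'` are such that `y'` is a reticulation and `(x', y')` is an
arc. -/
def ReticCherry (s : Set U) (A : U → U → Prop) (x y : U) : Prop :=
  x ≠ y ∧ DLeaf s A x ∧ DLeaf s A y ∧
    ∃ x' y', A x' x ∧ A y' y ∧ Retic s A y' ∧ A x' y'

/-- The cherry-picking operation on a standard cherry `(x, y)`: remove `y` and
its incident arc, and suppress the possible resulting subdivision vertex. -/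
def StandardPickAt (s : Set U) (A : U → U → Prop) (x y : U)
    (s' : Set U) (A' : U → U → Prop) : Prop :=
  StandardCherry s A x y ∧
    ∃ w, A w x ∧ A w y ∧
      SuppressIf (s \ {y}) (fun a b => A a b ∧ a ≠ y ∧ b ≠ y) w s' A'

/-- The cherry-picking operation on a reticulated cherry `(x, y)` with
in-neighbors `x', y'`: remove the arc `(x', y')` and suppress the possible
resulting subdivision vertices. -/
def ReticPickAt (s : Set U) (A : U → U → Prop) (x y : U)
    (s' : Set U) (A' : U → U → Prop) : Prop :=
  ReticCherry s A x y ∧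
    ∃ x' y', A x' x ∧ A y' y ∧ Retic s A y' ∧ A x' y' ∧
      ∃ s₁ A₁, SuppressIf s (fun a b => A a b ∧ ¬(a = x' ∧ b = y')) x' s₁ A₁ ∧
        SuppressIf s₁ A₁ y' s' A'

/-- One cherry-picking operation, on some cherry. -/
def CherryStep (N N' : Set U × (U → U → Prop)) : Prop :=
  ∃ x y, StandardPickAt N.1 N.2 x y N'.1 N'.2 ∨ ReticPickAt N.1 N.2 x y N'.1 N'.2

/-- Reachability in the underlying undirected graph (being in the same
connected component). -/
def UReach (A : U → U → Prop) : U → U → Prop :=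
  Relation.ReflTransGen fun a b => A a b ∨ A b a

/-- `(s, A)` is reduced: each connected component contains exactly one arc,
whose endpoints are a root and a leaf. -/
def Reduced (s : Set U) (A : U → U → Prop) : Prop :=
  ∀ v ∈ s, (∃! e : U × U, A e.1 e.2 ∧ UReach A v e.1) ∧
    ∀ a b, A a b → UReach A v a → (∀ w, ¬ A w a) ∧ ∀ w, ¬ A b w

/-- `(s, A)` is reducible: some sequence of cherry-picking operations
transforms it into a reduced DAG. -/
def Reducible (s : Set U) (A : U → U → Prop) : Prop :=
  ∃ N' : Set U × (U → U → Prop),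
    Relation.ReflTransGen CherryStep (s, A) N' ∧ Reduced N'.1 N'.2

/-- A directed path of `(s, A)`: a nonempty list of pairwise distinct vertices
of `s`, consecutive ones joined by arcs. -/
def IsPathOn (s : Set U) (A : U → U → Prop) (p : List U) : Prop :=
  p ≠ [] ∧ p.Nodup ∧ p.Chain' A ∧ ∀ v ∈ p, v ∈ s

/-- An induced directed path of `(s, A)`: the only arcs among its vertices are
the consecutive arcs of the path. -/
def IsInducedPathOn (s : Set U) (A : U → U → Prop) (p : List U) : Prop :=
  IsPathOn s A p ∧
    ∀ i j : Fin p.length, A (p.get i) (p.get j) → (j : ℕ) = (i : ℕ) + 1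

/-- A leaf induced path partition of `(s, A)`: a collection of vertex-disjoint
induced directed paths whose vertex sets partition `s`, each path ending at a
leaf. -/
def IsLeafIPPOn (s : Set U) (A : U → U → Prop) (P : Set (List U)) : Prop :=
  (∀ p ∈ P, IsInducedPathOn s A p) ∧
  (∀ v ∈ s, ∃! p, p ∈ P ∧ v ∈ p) ∧
  ∀ p ∈ P, ∃ x, p.getLast? = some x ∧ DLeaf s A x

def Nxt (p : List U) (a b : U) : Prop := ∃ i : ℕ, p[i]? = some a ∧ p[i+1]? = some b

lemma Nxt.mem₁ {p : List U} {a b : U} (h : Nxt p a b) : a ∈ p := by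
  obtain ⟨i, h1, _⟩ := h
  obtain ⟨hi, rfl⟩ := List.getElem?_eq_some_iff.1 h1
  exact List.getElem_mem _

lemma Nxt.mem₂ {p : List U} {a b : U} (h : Nxt p a b) : b ∈ p := by
  obtain ⟨i, _, h2⟩ := h
  obtain ⟨hi, rfl⟩ := List.getElem?_eq_some_iff.1 h2
  exact List.getElem_mem _

lemma nxt_of_eq_append {p l r : List U} {a b : U} (h : p = l ++ a :: b :: r) :
    Nxt p a b := by
  refine ⟨l.length, ?_, ?_⟩ <;> subst h
  · rw [List.getElem?_append_right le_rfl]; simp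
  · rw [List.getElem?_append_right (Nat.le_succ_of_le le_rfl)]; simp

lemma getElem?_inj' {p : List U} {i j : ℕ} {x : U} (hn : p.Nodup)
    (h1 : p[i]? = some x) (h2 : p[j]? = some x) : i = j := by
  have hi : i < p.length := (List.getElem?_eq_some_iff.1 h1).1
  exact (List.getElem?_inj hi hn).1 (h1.trans h2.symm)

lemma nxt_unique {p : List U} {a b c : U} (hn : p.Nodup) (h1 : Nxt p a b)
    (h2 : Nxt p a c) : b = c := by
  obtain ⟨i, hia, hib⟩ := h1
  obtain ⟨j, hja, hjb⟩ := h2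
  have : i = j := getElem?_inj' hn hia hja
  subst this
  rw [hib] at hjb; exact Option.some_inj.1 hjb

lemma nxt_append_left {u v : List U} {a b : U} (hn : (u ++ v).Nodup) (hb : b ∈ u)
    (h : Nxt (u ++ v) a b) : Nxt u a b := by
  obtain ⟨i, h1, h2⟩ := h
  obtain ⟨j, hj, hjb⟩ := List.mem_iff_getElem.1 hb
  have hj' : (u ++ v)[j]? = some b := by
    rw [List.getElem?_append_left hj]; simp [hjb, List.getElem?_eq_getElem hj]
  have hij : i + 1 = j := getElem?_inj' hn h2 hj'
  have hi1 : i + 1 < u.length := hij ▸ hj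
  refine ⟨i, ?_, ?_⟩
  · rw [← List.getElem?_append_left (Nat.lt_of_succ_lt hi1)]; exact h1
  · rw [← List.getElem?_append_left hi1]; exact h2

lemma nxt_append_right {u v : List U} {a b : U} (hn : (u ++ v).Nodup) (ha : a ∈ v)
    (h : Nxt (u ++ v) a b) : Nxt v a b := by
  obtain ⟨i, h1, h2⟩ := h
  obtain ⟨j, hj, hja⟩ := List.mem_iff_getElem.1 ha
  have hj' : (u ++ v)[u.length + j]? = some a := by
    rw [List.getElem?_append_right (Nat.le_add_right _ _)]
    simp [hja, List.getElem?_eq_getElem hj]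
  have hij : i = u.length + j := getElem?_inj' hn h1 hj'
  subst hij
  refine ⟨j, ?_, ?_⟩
  · rw [← h1, List.getElem?_append_right (Nat.le_add_right _ _)]; simp
  · rw [← h2, List.getElem?_append_right (by omega : u.length ≤ u.length + j + 1)]
    congr 1; omega

lemma nxt_extend {u v : List U} {a b : U} (h : Nxt u a b) : Nxt (u ++ v) a b := by
  obtain ⟨i, h1, h2⟩ := h
  have hi1 : i + 1 < u.length := (List.getElem?_eq_some_iff.1 h2).1
  exact ⟨i, by rw [List.getElem?_append_left (Nat.lt_of_succ_lt hi1)]; exact h1,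
    by rw [List.getElem?_append_left hi1]; exact h2⟩

lemma chain'_nxt {R : U → U → Prop} {p : List U} (hch : p.Chain' R) {a b : U}
    (h : Nxt p a b) : R a b := by
  obtain ⟨i, h1, h2⟩ := h
  have hi1 : i + 1 < p.length := (List.getElem?_eq_some_iff.1 h2).1
  have := List.isChain_iff_getElem.1 hch i (by omega)
  obtain ⟨_, rfl⟩ := List.getElem?_eq_some_iff.1 h1
  obtain ⟨_, rfl⟩ := List.getElem?_eq_some_iff.1 h2
  exact this

lemma chain'_of_nxt {R : U → U → Prop} {p : List U} (h : ∀ a b, Nxt p a b → R a b) :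
    p.Chain' R := by
  refine List.isChain_iff_getElem.2 fun i hi => ?_
  refine h _ _ ⟨i, ?_, ?_⟩
  · rw [List.getElem?_eq_getElem (by omega)]
  · rw [List.getElem?_eq_getElem (by omega)]

lemma rtg_of_chain'_append {R : U → U → Prop} {u v : List U} {a b : U}
    (hch : (u ++ v).Chain' R) (ha : a ∈ u) (hb : b ∈ v) :
    Relation.ReflTransGen R a b := by
  obtain ⟨i, hi, rfl⟩ := List.mem_iff_getElem.1 ha
  obtain ⟨j, hj, rfl⟩ := List.mem_iff_getElem.1 hb
  have key : ∀ n k : ℕ, ∀ hk : k < (u ++ v).length, ∀ hik : k = i + n,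
      Relation.ReflTransGen R u[i] (u ++ v)[k] := by
    intro n
    induction n with
    | zero =>
      intro k hk hik
      subst hik
      rw [List.getElem_append_left hi]
    | succ m ih =>
      intro k hk hik
      subst hik
      have h1 : i + m < (u ++ v).length := by omega
      have := List.isChain_iff_getElem.1 hch (i + m) (by simp at hk ⊢; omega)
      exact (ih _ h1 rfl).tail this
  have hk : u.length + j < (u ++ v).length := by simp; omega
  have := key (u.length + j - i) (u.length + j) hk (by omega)
  rw [List.getElem_append_right (by omega)] at this
  simpa using this

lemma acyclic_mono {A B : U → U → Prop} (h : ∀ a b, B a b → Relation.TransGen A a b)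
    (hA : ∀ v, ¬ Relation.TransGen A v v) : ∀ v, ¬ Relation.TransGen B v v := by
  intro v hv
  exact hA v (Relation.transGen_idem (r := A) ▸ Relation.TransGen.mono h v v hv)

lemma induced_iff {s : Set U} {A : U → U → Prop} {p : List U} :
    IsInducedPathOn s A p ↔
      p ≠ [] ∧ p.Nodup ∧ p.Chain' A ∧ (∀ v ∈ p, v ∈ s) ∧
        ∀ a b, a ∈ p → b ∈ p → A a b → Nxt p a b := by
  constructor
  · rintro ⟨⟨hne, hnd, hch, hmem⟩, hind⟩
    refine ⟨hne, hnd, hch, hmem, fun a b ha hb hab => ?_⟩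
    obtain ⟨i, hi, rfl⟩ := List.mem_iff_getElem.1 ha
    obtain ⟨j, hj, rfl⟩ := List.mem_iff_getElem.1 hb
    have := hind ⟨i, hi⟩ ⟨j, hj⟩ (by simpa using hab)
    simp only at this
    refine ⟨i, ?_, ?_⟩
    · simp [List.getElem?_eq_getElem hi]
    · rw [← this]; simp [List.getElem?_eq_getElem hj]
  · rintro ⟨hne, hnd, hch, hmem, hind⟩
    refine ⟨⟨hne, hnd, hch, hmem⟩, fun i j hab => ?_⟩
    have h1 : p[(i:ℕ)]? = some (p.get i) := by simp
    have h2 : p[(j:ℕ)]? = some (p.get j) := by simp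
    obtain ⟨n, hn1, hn2⟩ := hind _ _ (by simp [List.get_mem]) (by simp [List.get_mem]) hab
    have : n = (i:ℕ) := getElem?_inj' hnd hn1 h1
    subst this
    exact getElem?_inj' hnd h2 hn2

lemma leaf_last {B : U → U → Prop} {p : List U} {o : U} (hch : p.Chain' B)
    (ho : o ∈ p) (hleaf : ∀ v, ¬ B o v) : ∃ q₀, p = q₀ ++ [o] := by
  obtain ⟨l, r, rfl⟩ := List.append_of_mem ho
  cases r with
  | nil => exact ⟨l, rfl⟩
  | cons c r' =>
    exact absurd (chain'_nxt hch (nxt_of_eq_append rfl)) (hleaf c)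

lemma transfer_delleaf {t : Set U} {B : U → U → Prop} {y w : U}
    (hy : DLeaf t B y) (hyu : ∀ a, B a y → a = w)
    (hwc : ∃ c, B w c ∧ c ≠ y) {P' : Set (List U)}
    (hP' : IsLeafIPPOn (t \ {y}) (fun a b => B a b ∧ a ≠ y ∧ b ≠ y) P') :
    ∃ P, IsLeafIPPOn t B P := by
  obtain ⟨hind', hcov', hend'⟩ := hP'
  have hwy : w ≠ y := by
    rintro rfl
    obtain ⟨c, hbc, _⟩ := hwc
    exact hy.2 c hbc
  refine ⟨insert [y] P', ?_, ?_, ?_⟩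
  · intro p hp
    rcases Set.mem_insert_iff.1 hp with rfl | hp
    · refine induced_iff.2 ⟨by simp, by simp, by simp [List.Chain'], by simpa using hy.1, ?_⟩
      intro a b ha hb hab
      simp only [List.mem_singleton] at ha hb
      subst ha; subst hb
      exact absurd hab (hy.2 _)
    · obtain ⟨hne, hnd, hch, hmem, hind⟩ := induced_iff.1 (hind' p hp)
      have hney : ∀ v ∈ p, v ≠ y := by
        intro v hv h
        exact (hmem v hv).2 (by simp [h])
      refine induced_iff.2 ⟨hne, hnd, hch.imp fun _ _ h => h.1,
        fun v hv => (hmem v hv).1, ?_⟩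
      intro a b ha hb hab
      exact hind a b ha hb ⟨hab, hney a ha, hney b hb⟩
  · intro v hv
    by_cases hvy : v = y
    · refine ⟨[y], ⟨Set.mem_insert _ _, by simp [hvy]⟩, ?_⟩
      rintro q ⟨hq, hvq⟩
      rcases Set.mem_insert_iff.1 hq with rfl | hq
      · rfl
      · rw [hvy] at hvq
        exact absurd ((induced_iff.1 (hind' q hq)).2.2.2.1 _ hvq).2 (by simp)
    · obtain ⟨q, ⟨hqP, hvq⟩, huq⟩ := hcov' v ⟨hv, hvy⟩
      refine ⟨q, ⟨Set.mem_insert_of_mem _ hqP, hvq⟩, ?_⟩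
      rintro r ⟨hr, hvr⟩
      rcases Set.mem_insert_iff.1 hr with rfl | hr
      · simp only [List.mem_singleton] at hvr
        exact absurd hvr hvy
      · exact huq r ⟨hr, hvr⟩
  · intro p hp
    rcases Set.mem_insert_iff.1 hp with rfl | hp
    · exact ⟨y, by simp, hy⟩
    · obtain ⟨l, hl, hdl⟩ := hend' p hp
      refine ⟨l, hl, hdl.1.1, ?_⟩
      intro v hlv
      by_cases hvy : v = y
      · rw [hvy] at hlv
        have hlw := hyu l hlv
        subst hlw
        obtain ⟨c, hwc', hcy⟩ := hwc
        exact hdl.2 c ⟨hwc', hwy, hcy⟩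
      · exact hdl.2 v ⟨hlv, hdl.1.2, hvy⟩
lemma transfer_suppress {t : Set U} {B : U → U → Prop} {w : U} {t' : Set U}
    {B' : U → U → Prop} (hsup : SuppressIf t B w t' B')
    (hsupp : ∀ a b, B a b → a ∈ t ∧ b ∈ t)
    (hx : ∀ o, IsSubdiv t B w → B w o → (∀ v, ¬ B o v) ∧ (∀ a, B a o → a = w))
    {P' : Set (List U)} (hP' : IsLeafIPPOn t' B' P') :
    ∃ P, IsLeafIPPOn t B P := by
  rcases hsup with ⟨-, rfl, rfl⟩ | ⟨hsub, z, o, hzw, hwo, rfl, hAeq⟩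
  · exact ⟨P', hP'⟩
  have hB' : ∀ a b, B' a b ↔ ((B a b ∧ a ≠ w ∧ b ≠ w) ∨ (a = z ∧ b = o)) := by
    intro a b; rw [hAeq]
  have hwt : w ∈ t := hsub.1
  have houniq : ∀ c, B w c → c = o := fun c hc => hsub.2.2.unique hc hwo
  have hzuniq : ∀ a, B a w → a = z := fun a ha => hsub.2.1.unique ha hzw
  obtain ⟨holeaf, houn⟩ := hx o hsub hwo
  have hBww : ¬ B w w := by
    intro h
    have hwo' : w = o := houniq w h
    have h2 : ¬ B o w := holeaf w
    rw [← hwo'] at h2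
    exact h2 h
  have hzw' : z ≠ w := fun h => hBww (h ▸ hzw)
  have how : o ≠ w := fun h => hBww (h ▸ hwo)
  have hzo : z ≠ o := fun h => holeaf w (h ▸ hzw)
  have hBzo : ¬ B z o := fun h => hzw' (houn z h)
  have hot : o ∈ t := (hsupp _ _ hwo).2
  have hzt : z ∈ t := (hsupp _ _ hzw).1
  obtain ⟨hind', hcov', hend'⟩ := hP'
  obtain ⟨q, ⟨hqP, hoq⟩, huq⟩ := hcov' o ⟨hot, by simp [how]⟩
  obtain ⟨hne, hnd, hch, hmem, hind⟩ := induced_iff.1 (hind' q hqP)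
  have holeaf' : ∀ v, ¬ B' o v := by
    intro v hv
    rcases (hB' o v).1 hv with ⟨h, _, _⟩ | ⟨h, _⟩
    · exact holeaf v h
    · exact hzo h.symm
  obtain ⟨q₀, hq0⟩ := leaf_last hch hoq holeaf'
  rw [hq0] at hnd hch
  have hsubq : ∀ v ∈ q₀, v ∈ q := fun v hv => by
    rw [hq0]; exact List.mem_append_left _ hv
  have hwq : ∀ v ∈ q, v ≠ w := fun v hv h => (hmem v hv).2 (by simp [h])
  have hwq0 : w ∉ q₀ := fun h => hwq w (hsubq w h) rfl
  have hoq0 : o ∉ q₀ := fun h => List.disjoint_of_nodup_append hnd h (by simp)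
  have hq0last : q₀ ≠ [] → ∃ q₁, q₀ = q₁ ++ [z] := by
    intro h0
    obtain ⟨q₁, c, hc⟩ := q₀.eq_nil_or_concat.resolve_left h0
    rw [List.concat_eq_append] at hc
    have hnxt : Nxt (q₀ ++ [o]) c o :=
      nxt_of_eq_append (l := q₁) (r := []) (by rw [hc]; simp)
    have hco := chain'_nxt hch hnxt
    rcases (hB' c o).1 hco with ⟨h1, h2, _⟩ | ⟨h1, _⟩
    · exact absurd (houn c h1) h2
    · exact ⟨q₁, by rw [hc, h1]⟩
  have hndq0 : q₀.Nodup := hnd.of_append_left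
  have hndq' : (q₀ ++ [w, o]).Nodup := by
    rw [List.nodup_append]
    refine ⟨hndq0, by simpa using Ne.symm how, ?_⟩
    · intro a ha b hab hba
      subst hba
      simp only [List.mem_cons, List.mem_singleton, List.not_mem_nil, or_false] at hab
      rcases hab with rfl | rfl
      · exact hwq0 ha
      · exact hoq0 ha
  have hchq0 : q₀.Chain' B := by
    refine chain'_of_nxt fun a b hab => ?_
    have hb0 : b ∈ q₀ := hab.mem₂
    have := chain'_nxt (List.isChain_append.1 hch).1 hab
    rcases (hB' a b).1 this with ⟨h1, _, _⟩ | ⟨_, h2⟩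
    · exact h1
    · exact absurd (h2 ▸ hb0) hoq0
  have hq'ind : IsInducedPathOn t B (q₀ ++ [w, o]) := by
    refine induced_iff.2 ⟨by simp, hndq', ?_, ?_, ?_⟩
    · refine List.isChain_append.2 ⟨hchq0, by simp [List.isChain_pair, hwo], ?_⟩
      intro lx hlx ly hly
      simp only [List.head?_cons, Option.mem_some_iff] at hly
      subst hly
      have h0 : q₀ ≠ [] := by rintro rfl; simp at hlx
      obtain ⟨q₁, hq1⟩ := hq0last h0
      rw [hq1, List.getLast?_concat, Option.mem_some_iff] at hlx
      subst hlx
      exact hzw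
    · intro v hv
      rcases List.mem_append.1 hv with h | h
      · exact (hmem v (hsubq v h)).1
      · simp only [List.mem_cons, List.mem_singleton, List.not_mem_nil, or_false] at h
        rcases h with rfl | rfl
        · exact hwt
        · exact hot
    · intro a b ha hb hab
      by_cases hbw : b = w
      · have hab' : B a w := by rwa [hbw] at hab
        have haz : a = z := hzuniq a hab'
        have haq0 : a ∈ q₀ := by
          rcases List.mem_append.1 ha with h | h
          · exact h
          · simp only [List.mem_cons, List.mem_singleton, List.not_mem_nil, or_false] at h
            rcases h with rfl | rfl
            · exact absurd hab' hBww
            · exact absurd hab' (holeaf w)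
        rw [haz] at haq0
        obtain ⟨q₁, hq1⟩ := hq0last (List.ne_nil_of_mem haq0)
        rw [hbw, haz]
        refine nxt_of_eq_append (l := q₁) (r := [o]) ?_
        rw [hq1]; simp
      · by_cases haw : a = w
        · have hbo : b = o := houniq b (by rwa [haw] at hab)
          rw [haw, hbo]
          exact nxt_of_eq_append (l := q₀) (r := []) rfl
        · have hbo : b ≠ o := fun h => haw (houn a (h ▸ hab))
          have hao : a ≠ o := fun h => holeaf b (h ▸ hab)
          have haq0 : a ∈ q₀ := by
            rcases List.mem_append.1 ha with h | h
            · exact h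
            · simp only [List.mem_cons, List.mem_singleton, List.not_mem_nil,
                or_false] at h
              tauto
          have hbq0 : b ∈ q₀ := by
            rcases List.mem_append.1 hb with h | h
            · exact h
            · simp only [List.mem_cons, List.mem_singleton, List.not_mem_nil,
                or_false] at h
              tauto
          have hnq : Nxt q a b :=
            hind a b (hsubq a haq0) (hsubq b hbq0) ((hB' a b).2 (Or.inl ⟨hab, haw, hbw⟩))
          rw [hq0] at hnq
          exact nxt_extend (nxt_append_left hnd hbq0 hnq)
  refine ⟨insert (q₀ ++ [w, o]) (P' \ {q}), ?_, ?_, ?_⟩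
  · intro p hp
    rcases Set.mem_insert_iff.1 hp with rfl | ⟨hp, hpq⟩
    · exact hq'ind
    · obtain ⟨hne2, hnd2, hch2, hmem2, hind2⟩ := induced_iff.1 (hind' p hp)
      have hop : o ∉ p := fun h => hpq (huq p ⟨hp, h⟩)
      refine induced_iff.2 ⟨hne2, hnd2, ?_, fun v hv => (hmem2 v hv).1, ?_⟩
      · refine chain'_of_nxt fun a b hab => ?_
        have hb2 : b ∈ p := hab.mem₂
        rcases (hB' a b).1 (chain'_nxt hch2 hab) with ⟨h1, _, _⟩ | ⟨_, h2⟩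
        · exact h1
        · exact absurd (h2 ▸ hb2) hop
      · intro a b ha hb hab
        have haw : a ≠ w := fun h => (hmem2 a ha).2 (by simp [h])
        have hbw : b ≠ w := fun h => (hmem2 b hb).2 (by simp [h])
        exact hind2 a b ha hb ((hB' a b).2 (Or.inl ⟨hab, haw, hbw⟩))
  · intro v hv
    by_cases hvw : v = w
    · refine ⟨q₀ ++ [w, o], ⟨Set.mem_insert _ _, by simp [hvw]⟩, ?_⟩
      rintro r ⟨hr, hvr⟩
      rcases Set.mem_insert_iff.1 hr with rfl | ⟨hr, hrq⟩
      · rfl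
      · rw [hvw] at hvr
        exact absurd (((induced_iff.1 (hind' r hr)).2.2.2.1 w hvr).2 rfl) (by simp)
    · obtain ⟨pv, ⟨hpvP, hvp⟩, hup⟩ := hcov' v ⟨hv, hvw⟩
      by_cases hpq : pv = q
      · refine ⟨q₀ ++ [w, o], ⟨Set.mem_insert _ _, ?_⟩, ?_⟩
        · rw [hpq, hq0] at hvp
          rcases List.mem_append.1 hvp with h | h
          · exact List.mem_append_left _ h
          · simp only [List.mem_singleton] at h
            subst h
            simp
        · rintro r ⟨hr, hvr⟩
          rcases Set.mem_insert_iff.1 hr with rfl | ⟨hr, hrq⟩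
          · rfl
          · exact absurd ((hup r ⟨hr, hvr⟩).trans hpq) hrq
      · refine ⟨pv, ⟨Set.mem_insert_of_mem _ ⟨hpvP, hpq⟩, hvp⟩, ?_⟩
        rintro r ⟨hr, hvr⟩
        rcases Set.mem_insert_iff.1 hr with rfl | ⟨hr, hrq⟩
        · exfalso
          rcases List.mem_append.1 hvr with h | h
          · exact hpq (hup q ⟨hqP, hsubq v h⟩).symm
          · simp only [List.mem_cons, List.mem_singleton, List.not_mem_nil,
              or_false] at h
            rcases h with rfl | rfl
            · exact hvw rfl
            · exact hpq (hup q ⟨hqP, hoq⟩).symm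
        · exact hup r ⟨hr, hvr⟩
  · intro p hp
    rcases Set.mem_insert_iff.1 hp with rfl | ⟨hp, hpq⟩
    · refine ⟨o, ?_, hot, holeaf⟩
      have : q₀ ++ [w, o] = (q₀ ++ [w]) ++ [o] := by simp
      rw [this, List.getLast?_concat]
    · obtain ⟨l, hl, hdl⟩ := hend' p hp
      have hlz : l ≠ z := fun h => hdl.2 o ((hB' l o).2 (Or.inr ⟨h, rfl⟩))
      refine ⟨l, hl, hdl.1.1, ?_⟩
      intro v hlv
      by_cases hvw : v = w
      · rw [hvw] at hlv
        exact hlz (hzuniq l hlv)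
      · exact hdl.2 v ((hB' l v).2 (Or.inl ⟨hlv, hdl.1.2, hvw⟩))
lemma transfer_delarc {t : Set U} {B B' : U → U → Prop} {x' y' x : U}
    (hacyc : ∀ v, ¬ Relation.TransGen B v v)
    (hsupp : ∀ a b, B a b → a ∈ t ∧ b ∈ t)
    (harc : B x' y') (hxx : B x' x)
    (hxleaf : ∀ v, ¬ B x v) (hxu : ∀ a, B a x → a = x')
    (hy'c : ∃ c, B y' c)
    (hB' : ∀ a b, B' a b ↔ (B a b ∧ ¬(a = x' ∧ b = y')))
    {P' : Set (List U)} (hP' : IsLeafIPPOn t B' P') :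
    ∃ P, IsLeafIPPOn t B P := by
  have hirr : ∀ a, ¬ B a a := fun a h => hacyc a (.single h)
  have hxy' : x' ≠ y' := fun h => hirr x' (by rw [h] at harc ⊢; exact harc)
  have hxx' : x ≠ x' := fun h => hirr x' (by rwa [h] at hxx)
  have hxney' : x ≠ y' := by
    rintro rfl
    obtain ⟨c, hc⟩ := hy'c
    exact hxleaf c hc
  have hB'x'x : B' x' x := (hB' _ _).2 ⟨hxx, fun h => hxney' h.2⟩
  have hxleaf' : ∀ v, ¬ B' x v := fun v h => hxleaf v ((hB' _ _).1 h).1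
  have hliftleaf : ∀ l, DLeaf t B' l → DLeaf t B l := by
    intro l hdl
    refine ⟨hdl.1, fun v hv => ?_⟩
    by_cases hl : l = x'
    · exact hdl.2 x (by rw [hl]; exact hB'x'x)
    · exact hdl.2 v ((hB' _ _).2 ⟨hv, fun hh => hl hh.1⟩)
  obtain ⟨hind', hcov', hend'⟩ := hP'
  by_cases hsame : ∃ p ∈ P', x' ∈ p ∧ y' ∈ p
  · obtain ⟨p, hpP, hx'p, hy'p⟩ := hsame
    obtain ⟨hne, hnd, hch, hmem, hind⟩ := induced_iff.1 (hind' p hpP)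
    have hchB : p.Chain' B := hch.imp fun _ _ h => ((hB' _ _).1 h).1
    obtain ⟨pre, rest, hpeq⟩ := List.append_of_mem hx'p
    have hpeq2 : p = (pre ++ [x']) ++ rest := by rw [hpeq]; simp
    have hnd2 : ((pre ++ [x']) ++ rest).Nodup := by rw [← hpeq2]; exact hnd
    have hch2 : List.Chain' B' ((pre ++ [x']) ++ rest) := by rw [← hpeq2]; exact hch
    have hy'rest : y' ∈ rest := by
      have hy'p2 := hy'p
      rw [hpeq] at hy'p2
      rcases List.mem_append.1 hy'p2 with h | h
      · exfalso
        have hrtg : Relation.ReflTransGen B y' x' :=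
          rtg_of_chain'_append (u := pre) (v := x' :: rest)
            (by rw [← hpeq]; exact hchB) h (by simp)
        exact hacyc y' (Relation.TransGen.tail' hrtg harc)
      · rcases List.mem_cons.1 h with h | h
        · exact absurd h hxy'.symm
        · exact h
    have hrestne : rest ≠ [] := List.ne_nil_of_mem hy'rest
    have hx'rest : x' ∉ rest := fun h =>
      List.disjoint_of_nodup_append hnd2 (by simp) h
    have hy'pre : y' ∉ pre ++ [x'] := fun h =>
      List.disjoint_of_nodup_append hnd2 h hy'rest
    have hxp : x ∉ p := by
      intro hxp
      rw [hpeq] at hxp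
      rcases List.mem_append.1 hxp with h | h
      · obtain ⟨u, v, huv⟩ := List.append_of_mem h
        obtain ⟨c, vr, hvr⟩ : ∃ c vr, v ++ x' :: rest = c :: vr := by
          cases v with
          | nil => exact ⟨x', rest, rfl⟩
          | cons c v' => exact ⟨c, v' ++ x' :: rest, by simp⟩
        have hnx : Nxt p x c := nxt_of_eq_append (l := u) (r := vr)
          (by rw [hpeq, huv]; simp [hvr])
        exact hxleaf c (chain'_nxt hchB hnx)
      · rcases List.mem_cons.1 h with h | h
        · exact hxx' h
        · obtain ⟨u, v, huv⟩ := List.append_of_mem h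
          cases v with
          | cons c v' =>
            have hnx : Nxt p x c := nxt_of_eq_append (l := pre ++ x' :: u) (r := v')
              (by rw [hpeq, huv]; simp)
            exact hxleaf c (chain'_nxt hchB hnx)
          | nil =>
            rcases u.eq_nil_or_concat with hu | ⟨u1, c, hu⟩
            · rw [hu] at huv
              simp only [List.nil_append] at huv
              rw [huv] at hy'rest
              simp only [List.mem_singleton] at hy'rest
              exact hxney' hy'rest.symm
            · rw [List.concat_eq_append] at hu
              have hnx : Nxt p c x := nxt_of_eq_append (l := pre ++ x' :: u1) (r := [])
                (by rw [hpeq, huv, hu]; simp)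
              have hcx : c = x' := hxu c (chain'_nxt hchB hnx)
              apply hx'rest
              rw [huv, hu, ← hcx]
              simp
    obtain ⟨qx, ⟨hqxP, hxqx⟩, huqx⟩ := hcov' x ((hsupp _ _ hxx).2)
    obtain ⟨px2, ⟨hpx2P, hx'px2⟩, hupx'⟩ := hcov' x' ((hsupp _ _ hxx).1)
    have hppx2 : p = px2 := hupx' p ⟨hpP, hx'p⟩
    have hqxp : qx ≠ p := fun h => hxp (by rw [← h]; exact hxqx)
    have hqxeq : qx = [x] := by
      obtain ⟨hne3, hnd3, hch3, hmem3, hind3⟩ := induced_iff.1 (hind' qx hqxP)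
      obtain ⟨q₀, hq0⟩ := leaf_last hch3 hxqx hxleaf'
      rcases q₀.eq_nil_or_concat with h0 | ⟨q₁, c, h0⟩
      · rw [hq0, h0]; rfl
      · exfalso
        rw [List.concat_eq_append] at h0
        have hnx : Nxt qx c x := nxt_of_eq_append (l := q₁) (r := [])
          (by rw [hq0, h0]; simp)
        have hcx : c = x' := hxu c ((hB' _ _).1 (chain'_nxt hch3 hnx)).1
        have hcqx : x' ∈ qx := by
          rw [← hcx, hq0, h0]; simp
        exact hqxp ((hupx' qx ⟨hqxP, hcqx⟩).trans hppx2.symm)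
    have hp1eq : pre ++ [x', x] = (pre ++ [x']) ++ [x] := by simp
    have hxpre : x ∉ pre ++ [x'] := fun h => hxp (by rw [hpeq2]; exact List.mem_append_left _ h)
    have hmem2 : ∀ v ∈ pre ++ [x'], v ∈ p := fun v hv => by
      rw [hpeq2]; exact List.mem_append_left _ hv
    have hmem3 : ∀ v ∈ rest, v ∈ p := fun v hv => by
      rw [hpeq2]; exact List.mem_append_right _ hv
    have hp1ind : IsInducedPathOn t B (pre ++ [x', x]) := by
      refine induced_iff.2 ⟨by simp, ?_, ?_, ?_, ?_⟩
      · rw [hp1eq, List.nodup_append]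
        refine ⟨hnd2.of_append_left, by simp, ?_⟩
        intro a ha b hax hab
        subst hab
        simp only [List.mem_singleton] at hax
        rw [hax] at ha
        exact hxpre ha
      · rw [hp1eq]
        refine List.isChain_append.2 ⟨?_, by simp, ?_⟩
        · exact ((List.isChain_append.1 hch2).1).imp fun _ _ h => ((hB' _ _).1 h).1
        · intro lx hlx ly hly
          simp only [List.head?_cons, Option.mem_some_iff] at hly
          rw [List.getLast?_concat, Option.mem_some_iff] at hlx
          rw [← hly, ← hlx]
          exact hxx
      · intro v hv
        rw [hp1eq] at hv
        rcases List.mem_append.1 hv with h | h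
        · exact hmem v (hmem2 v h)
        · simp only [List.mem_singleton] at h
          rw [h]; exact (hsupp _ _ hxx).2
      · intro a b ha hb hab
        by_cases hbx : b = x
        · have hax' : a = x' := hxu a (by rwa [hbx] at hab)
          rw [hbx, hax']
          exact nxt_of_eq_append (l := pre) (r := []) rfl
        · by_cases hax : a = x
          · exact absurd (by rwa [hax] at hab) (hxleaf b)
          · have ha2 : a ∈ pre ++ [x'] := by
              rw [hp1eq] at ha
              rcases List.mem_append.1 ha with h | h
              · exact h
              · simp only [List.mem_singleton] at h; exact absurd h hax
            have hb2 : b ∈ pre ++ [x'] := by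
              rw [hp1eq] at hb
              rcases List.mem_append.1 hb with h | h
              · exact h
              · simp only [List.mem_singleton] at h; exact absurd h hbx
            have hpairne : ¬(a = x' ∧ b = y') := by
              rintro ⟨h1, h2⟩
              rw [h2] at hb2
              exact hy'pre hb2
            have hnp : Nxt p a b :=
              hind a b (hmem2 a ha2) (hmem2 b hb2) ((hB' _ _).2 ⟨hab, hpairne⟩)
            rw [hpeq2] at hnp
            rw [hp1eq]
            exact nxt_extend (nxt_append_left hnd2 hb2 hnp)
    have hp2ind : IsInducedPathOn t B rest := by
      refine induced_iff.2 ⟨hrestne, hnd2.of_append_right, ?_,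
        fun v hv => hmem v (hmem3 v hv), ?_⟩
      · exact ((List.isChain_append.1 hch2).2.1).imp fun _ _ h => ((hB' _ _).1 h).1
      · intro a b ha hb hab
        have hpairne : ¬(a = x' ∧ b = y') := by
          rintro ⟨h1, h2⟩
          rw [h1] at ha
          exact hx'rest ha
        have hnp : Nxt p a b :=
          hind a b (hmem3 a ha) (hmem3 b hb) ((hB' _ _).2 ⟨hab, hpairne⟩)
        rw [hpeq2] at hnp
        exact nxt_append_right hnd2 ha hnp
    obtain ⟨lp, hlp, hdlp⟩ := hend' p hpP
    have hrestlast : rest.getLast? = some lp := by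
      obtain ⟨r1, c, hr1⟩ := rest.eq_nil_or_concat.resolve_left hrestne
      rw [List.concat_eq_append] at hr1
      have hplast : p.getLast? = some c := by
        rw [hpeq2, hr1, ← List.append_assoc, List.getLast?_concat]
      rw [hplast] at hlp
      have hclp : c = lp := Option.some_inj.1 hlp
      rw [hr1, List.getLast?_concat, hclp]
    refine ⟨insert (pre ++ [x', x]) (insert rest ((P' \ {p}) \ {qx})), ?_, ?_, ?_⟩
    · intro r hr
      rcases Set.mem_insert_iff.1 hr with rfl | hr
      · exact hp1ind
      · rcases Set.mem_insert_iff.1 hr with rfl | ⟨⟨hrP, hrp⟩, hrqx⟩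
        · exact hp2ind
        · obtain ⟨hne4, hnd4, hch4, hmem4, hind4⟩ := induced_iff.1 (hind' r hrP)
          refine induced_iff.2 ⟨hne4, hnd4,
            hch4.imp fun _ _ h => ((hB' _ _).1 h).1, hmem4, ?_⟩
          intro a b ha hb hab
          have hpairne : ¬(a = x' ∧ b = y') := by
            rintro ⟨h1, h2⟩
            rw [h1] at ha
            exact hrp ((hupx' r ⟨hrP, ha⟩).trans hppx2.symm)
          exact hind4 a b ha hb ((hB' _ _).2 ⟨hab, hpairne⟩)
    · intro v hv
      obtain ⟨pv, ⟨hpvP, hvpv⟩, hupv⟩ := hcov' v hv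
      by_cases h1 : pv = qx
      · have hvx : v = x := by
          rw [h1, hqxeq] at hvpv
          simpa using hvpv
        refine ⟨pre ++ [x', x], ⟨Set.mem_insert _ _, by rw [hvx]; simp⟩, ?_⟩
        rintro r ⟨hr, hvr⟩
        rcases Set.mem_insert_iff.1 hr with rfl | hr
        · rfl
        · exfalso
          rcases Set.mem_insert_iff.1 hr with rfl | ⟨⟨hrP, hrp⟩, hrqx⟩
          · rw [hvx] at hvr
            exact hxp (hmem3 x hvr)
          · exact hrqx ((hupv r ⟨hrP, hvr⟩).trans h1)
      · by_cases h2 : pv = p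
        · have hvp2 : v ∈ (pre ++ [x']) ++ rest := by rw [← hpeq2, ← h2]; exact hvpv
          rcases List.mem_append.1 hvp2 with hva | hvb
          · refine ⟨pre ++ [x', x], ⟨Set.mem_insert _ _,
              by rw [hp1eq]; exact List.mem_append_left _ hva⟩, ?_⟩
            rintro r ⟨hr, hvr⟩
            rcases Set.mem_insert_iff.1 hr with rfl | hr
            · rfl
            · exfalso
              rcases Set.mem_insert_iff.1 hr with rfl | ⟨⟨hrP, hrp⟩, hrqx⟩
              · exact List.disjoint_of_nodup_append hnd2 hva hvr
              · exact hrp ((hupv r ⟨hrP, hvr⟩).trans h2)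
          · refine ⟨rest, ⟨Set.mem_insert_of_mem _ (Set.mem_insert _ _), hvb⟩, ?_⟩
            rintro r ⟨hr, hvr⟩
            rcases Set.mem_insert_iff.1 hr with rfl | hr
            · exfalso
              rw [hp1eq] at hvr
              rcases List.mem_append.1 hvr with h | h
              · exact List.disjoint_of_nodup_append hnd2 h hvb
              · simp only [List.mem_singleton] at h
                rw [h] at hvb
                exact hxp (hmem3 x hvb)
            · rcases Set.mem_insert_iff.1 hr with rfl | ⟨⟨hrP, hrp⟩, hrqx⟩
              · rfl
              · exact absurd ((hupv r ⟨hrP, hvr⟩).trans h2) hrp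
        · refine ⟨pv, ⟨Set.mem_insert_of_mem _
            (Set.mem_insert_of_mem _ ⟨⟨hpvP, h2⟩, h1⟩), hvpv⟩, ?_⟩
          rintro r ⟨hr, hvr⟩
          rcases Set.mem_insert_iff.1 hr with rfl | hr
          · exfalso
            rw [hp1eq] at hvr
            rcases List.mem_append.1 hvr with h | h
            · exact h2 (hupv p ⟨hpP, hmem2 v h⟩).symm
            · simp only [List.mem_singleton] at h
              apply h1
              refine (hupv qx ⟨hqxP, ?_⟩).symm
              rw [hqxeq, h]
              simp
          · rcases Set.mem_insert_iff.1 hr with rfl | ⟨⟨hrP, hrp⟩, hrqx⟩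
            · exact absurd (hupv p ⟨hpP, hmem3 v hvr⟩).symm h2
            · exact hupv r ⟨hrP, hvr⟩
    · intro r hr
      rcases Set.mem_insert_iff.1 hr with rfl | hr
      · refine ⟨x, ?_, (hsupp _ _ hxx).2, hxleaf⟩
        rw [hp1eq]
        exact List.getLast?_concat
      · rcases Set.mem_insert_iff.1 hr with rfl | ⟨⟨hrP, hrp⟩, hrqx⟩
        · exact ⟨lp, hrestlast, hliftleaf lp hdlp⟩
        · obtain ⟨l, hl, hdl⟩ := hend' r hrP
          exact ⟨l, hl, hliftleaf l hdl⟩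
  · push_neg at hsame
    refine ⟨P', ?_, hcov', ?_⟩
    · intro p hp
      obtain ⟨hne, hnd, hch, hmem, hind⟩ := induced_iff.1 (hind' p hp)
      refine induced_iff.2 ⟨hne, hnd, hch.imp fun _ _ h => ((hB' _ _).1 h).1, hmem, ?_⟩
      intro a b ha hb hab
      have hpairne : ¬(a = x' ∧ b = y') := by
        rintro ⟨h1, h2⟩
        rw [h1] at ha
        rw [h2] at hb
        exact hsame p hp ha hb
      exact hind a b ha hb ((hB' _ _).2 ⟨hab, hpairne⟩)
    · intro p hp
      obtain ⟨l, hl, hdl⟩ := hend' p hp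
      exact ⟨l, hl, hliftleaf l hdl⟩
lemma suppress_inv {t : Set U} {B : U → U → Prop} {w : U} {t' : Set U}
    {B' : U → U → Prop} (hsup : SuppressIf t B w t' B')
    (hdag : IsDag t B) (hld : ∀ v, DLeaf t B v → ∃! u, B u v)
    (hx : ∀ o, IsSubdiv t B w → B w o → (∀ v, ¬ B o v) ∧ (∀ a, B a o → a = w)) :
    IsDag t' B' ∧ ∀ v, DLeaf t' B' v → ∃! u, B' u v := by
  obtain ⟨hfin, hsupp, hacyc⟩ := hdag
  rcases hsup with ⟨-, rfl, rfl⟩ | ⟨hsub, z, o, hzw, hwo, rfl, hAeq⟩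
  · exact ⟨⟨hfin, hsupp, hacyc⟩, hld⟩
  have hB' : ∀ a b, B' a b ↔ ((B a b ∧ a ≠ w ∧ b ≠ w) ∨ (a = z ∧ b = o)) := by
    intro a b; rw [hAeq]
  have houniq : ∀ c, B w c → c = o := fun c hc => hsub.2.2.unique hc hwo
  have hzuniq : ∀ a, B a w → a = z := fun a ha => hsub.2.1.unique ha hzw
  obtain ⟨holeaf, houn⟩ := hx o hsub hwo
  have hBww : ¬ B w w := by
    intro h
    have hwo' : w = o := houniq w h
    have h2 : ¬ B o w := holeaf w
    rw [← hwo'] at h2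
    exact h2 h
  have hzw' : z ≠ w := fun h => hBww (h ▸ hzw)
  have how : o ≠ w := fun h => hBww (h ▸ hwo)
  have hzo : z ≠ o := fun h => holeaf w (h ▸ hzw)
  have hot : o ∈ t := (hsupp hwo).2
  have hzt : z ∈ t := (hsupp hzw).1
  refine ⟨⟨hfin.subset Set.diff_subset, ?_, ?_⟩, ?_⟩
  · intro a b hab
    rcases (hB' a b).1 hab with ⟨h, haw, hbw⟩ | ⟨ha, hb⟩
    · exact ⟨⟨(hsupp h).1, by simp [haw]⟩, ⟨(hsupp h).2, by simp [hbw]⟩⟩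
    · rw [ha, hb]
      exact ⟨⟨hzt, by simp [hzw']⟩, ⟨hot, by simp [how]⟩⟩
  · refine acyclic_mono ?_ hacyc
    intro a b hab
    rcases (hB' a b).1 hab with ⟨h, -, -⟩ | ⟨ha, hb⟩
    · exact .single h
    · rw [ha, hb]
      exact Relation.TransGen.head hzw (.single hwo)
  · intro v hdl
    have hvw : v ≠ w := by
      have := hdl.1
      intro h
      rw [h] at this
      exact this.2 rfl
    have hvleafB : ∀ c, ¬ B v c := by
      intro c hc
      by_cases hcw : c = w
      · have hvz : v = z := hzuniq v (by rwa [hcw] at hc)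
        exact hdl.2 o ((hB' v o).2 (Or.inr ⟨hvz, rfl⟩))
      · exact hdl.2 c ((hB' v c).2 (Or.inl ⟨hc, hvw, hcw⟩))
    by_cases hvo : v = o
    · refine ⟨z, (hB' z v).2 (Or.inr ⟨rfl, hvo⟩), ?_⟩
      intro a ha
      rcases (hB' a v).1 ha with ⟨h, haw, -⟩ | ⟨ha2, -⟩
      · exact absurd (houn a (by rwa [hvo] at h)) haw
      · exact ha2
    · obtain ⟨u, hu, huu⟩ := hld v ⟨hdl.1.1, hvleafB⟩
      have huw : u ≠ w := fun h => hvo (houniq v (by rwa [h] at hu))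
      refine ⟨u, (hB' u v).2 (Or.inl ⟨hu, huw, hvw⟩), ?_⟩
      intro a ha
      rcases (hB' a v).1 ha with ⟨h, -, -⟩ | ⟨-, hv2⟩
      · exact huu a h
      · exact absurd hv2 hvo

lemma delleaf_inv {t : Set U} {B : U → U → Prop} {y w : U}
    (hy : DLeaf t B y) (hyu : ∀ a, B a y → a = w)
    (hwc : ∃ c, B w c ∧ c ≠ y)
    (hdag : IsDag t B) (hld : ∀ v, DLeaf t B v → ∃! u, B u v) :
    IsDag (t \ {y}) (fun a b => B a b ∧ a ≠ y ∧ b ≠ y) ∧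
      ∀ v, DLeaf (t \ {y}) (fun a b => B a b ∧ a ≠ y ∧ b ≠ y) v →
        ∃! u, (fun a b => B a b ∧ a ≠ y ∧ b ≠ y) u v := by
  obtain ⟨hfin, hsupp, hacyc⟩ := hdag
  have hwy : w ≠ y := by
    rintro rfl
    obtain ⟨c, hbc, -⟩ := hwc
    exact hy.2 c hbc
  refine ⟨⟨hfin.subset Set.diff_subset, ?_, ?_⟩, ?_⟩
  · rintro a b ⟨hab, hay, hby⟩
    exact ⟨⟨(hsupp hab).1, by simp [hay]⟩, ⟨(hsupp hab).2, by simp [hby]⟩⟩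
  · exact acyclic_mono (fun a b hab => .single hab.1) hacyc
  · intro v hdl
    have hvy : v ≠ y := by
      have := hdl.1
      intro h
      rw [h] at this
      exact this.2 rfl
    have hvleafB : ∀ c, ¬ B v c := by
      intro c hc
      by_cases hcy : c = y
      · have hvw : v = w := hyu v (by rwa [hcy] at hc)
        obtain ⟨d, hd, hdy⟩ := hwc
        exact hdl.2 d ⟨by rwa [hvw], hvy, hdy⟩
      · exact hdl.2 c ⟨hc, hvy, hcy⟩
    obtain ⟨u, hu, huu⟩ := hld v ⟨hdl.1.1, hvleafB⟩
    have huy : u ≠ y := by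
      rintro rfl
      exact hy.2 v hu
    exact ⟨u, ⟨hu, huy, hvy⟩, fun a ha => huu a ha.1⟩

lemma delarc_inv {t : Set U} {B : U → U → Prop} {x' y' x : U}
    (harc : B x' y') (hxx : B x' x)
    (hxleaf : ∀ v, ¬ B x v) (hy'c : ∃ c, B y' c)
    (hdag : IsDag t B) (hld : ∀ v, DLeaf t B v → ∃! u, B u v) :
    IsDag t (fun a b => B a b ∧ ¬(a = x' ∧ b = y')) ∧
      ∀ v, DLeaf t (fun a b => B a b ∧ ¬(a = x' ∧ b = y')) v →
        ∃! u, (fun a b => B a b ∧ ¬(a = x' ∧ b = y')) u v := by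
  obtain ⟨hfin, hsupp, hacyc⟩ := hdag
  have hirr : ∀ a, ¬ B a a := fun a h => hacyc a (.single h)
  have hxy' : x' ≠ y' := fun h => hirr x' (by rw [h] at harc ⊢; exact harc)
  have hxney' : x ≠ y' := by
    rintro rfl
    obtain ⟨c, hc⟩ := hy'c
    exact hxleaf c hc
  have hB'x'x : (fun a b => B a b ∧ ¬(a = x' ∧ b = y')) x' x :=
    ⟨hxx, fun h => hxney' h.2⟩
  refine ⟨⟨hfin, fun a b hab => hsupp hab.1,
    acyclic_mono (fun a b hab => .single hab.1) hacyc⟩, ?_⟩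
  intro v hdl
  have hvx' : v ≠ x' := by
    intro h
    exact hdl.2 x (by rw [h]; exact hB'x'x)
  have hvy' : v ≠ y' := by
    intro h
    obtain ⟨c, hc⟩ := hy'c
    refine hdl.2 c ⟨by rwa [h], ?_⟩
    rintro ⟨h1, -⟩
    rw [h] at h1
    exact hxy' h1.symm
  have hvleafB : ∀ c, ¬ B v c := fun c hc =>
    hdl.2 c ⟨hc, fun hh => hvx' hh.1⟩
  obtain ⟨u, hu, huu⟩ := hld v ⟨hdl.1, hvleafB⟩
  exact ⟨u, ⟨hu, fun hh => hvy' hh.2⟩, fun a ha => huu a ha.1⟩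
lemma step_standard {s : Set U} {A : U → U → Prop} {x y : U} {s' : Set U}
    {A' : U → U → Prop} (hpick : StandardPickAt s A x y s' A')
    (hdag : IsDag s A) (hld : ∀ v, DLeaf s A v → ∃! u, A u v) :
    (IsDag s' A' ∧ ∀ v, DLeaf s' A' v → ∃! u, A' u v) ∧
      ∀ P', IsLeafIPPOn s' A' P' → ∃ P, IsLeafIPPOn s A P := by
  obtain ⟨⟨hxy, hlx, hly, -⟩, w, hwx, hwy, hsup⟩ := hpick
  have hacyc := hdag.2.2
  have hsupp := hdag.2.1
  have hirr : ∀ a, ¬ A a a := fun a h => hacyc a (.single h)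
  have hwny : w ≠ y := fun h => hirr y (by rwa [h] at hwy)
  have hyu : ∀ a, A a y → a = w := fun a ha => (hld y hly).unique ha hwy
  have hxu : ∀ a, A a x → a = w := fun a ha => (hld x hlx).unique ha hwx
  have hBsupp : ∀ a b, (fun a b => A a b ∧ a ≠ y ∧ b ≠ y) a b →
      a ∈ s \ {y} ∧ b ∈ s \ {y} := by
    rintro a b ⟨hab, hay, hby⟩
    exact ⟨⟨(hsupp hab).1, by simp [hay]⟩, ⟨(hsupp hab).2, by simp [hby]⟩⟩
  have hBwx : (fun a b => A a b ∧ a ≠ y ∧ b ≠ y) w x := ⟨hwx, hwny, hxy⟩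
  have hxB : ∀ o, IsSubdiv (s \ {y}) (fun a b => A a b ∧ a ≠ y ∧ b ≠ y) w →
      (fun a b => A a b ∧ a ≠ y ∧ b ≠ y) w o →
      (∀ v, ¬ (fun a b => A a b ∧ a ≠ y ∧ b ≠ y) o v) ∧
      (∀ a, (fun a b => A a b ∧ a ≠ y ∧ b ≠ y) a o → a = w) := by
    intro o hsub hwo
    have hox : o = x := hsub.2.2.unique hwo hBwx
    rw [hox]
    exact ⟨fun v h => hlx.2 v h.1, fun a h => hxu a h.1⟩
  have hinvB := delleaf_inv hly hyu ⟨x, hwx, hxy⟩ hdag hld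
  constructor
  · exact suppress_inv hsup hinvB.1 hinvB.2 hxB
  · intro P' hP'
    obtain ⟨Q, hQ⟩ := transfer_suppress hsup hBsupp hxB hP'
    exact transfer_delleaf hly hyu ⟨x, hwx, hxy⟩ hQ

lemma step_retic {s : Set U} {A : U → U → Prop} {x y : U} {s' : Set U}
    {A' : U → U → Prop} (hpick : ReticPickAt s A x y s' A')
    (hdag : IsDag s A) (hld : ∀ v, DLeaf s A v → ∃! u, A u v) :
    (IsDag s' A' ∧ ∀ v, DLeaf s' A' v → ∃! u, A' u v) ∧
      ∀ P', IsLeafIPPOn s' A' P' → ∃ P, IsLeafIPPOn s A P := by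
  obtain ⟨⟨hxy, hlx, hly, -⟩, x', y', hx'x, hy'y, hret, hx'y', s₁, A₁, hsup1, hsup2⟩ := hpick
  have hacyc := hdag.2.2
  have hsupp := hdag.2.1
  have hirr : ∀ a, ¬ A a a := fun a h => hacyc a (.single h)
  have hxu : ∀ a, A a x → a = x' := fun a ha => (hld x hlx).unique ha hx'x
  have hyu : ∀ a, A a y → a = y' := fun a ha => (hld y hly).unique ha hy'y
  have hxy' : x' ≠ y' := fun h => hirr y' (by rw [h] at hx'y'; exact hx'y')
  have hxnx' : x ≠ x' := fun h => hirr x' (by rwa [h] at hx'x)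
  have hyny' : y ≠ y' := fun h => hirr y' (by rwa [h] at hy'y)
  have hxny' : x ≠ y' := fun h => hlx.2 y (by rw [h]; exact hy'y)
  have hynx' : y ≠ x' := fun h => hly.2 x (by rw [h]; exact hx'x)
  have hAmsupp : ∀ a b, (fun a b => A a b ∧ ¬(a = x' ∧ b = y')) a b →
      a ∈ s ∧ b ∈ s := fun a b hab => hsupp hab.1
  have hAmx'x : (fun a b => A a b ∧ ¬(a = x' ∧ b = y')) x' x :=
    ⟨hx'x, fun h => hxny' h.2⟩
  have hAmy'y : (fun a b => A a b ∧ ¬(a = x' ∧ b = y')) y' y :=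
    ⟨hy'y, fun h => hxy' h.1.symm⟩
  have hxAm : ∀ o, IsSubdiv s (fun a b => A a b ∧ ¬(a = x' ∧ b = y')) x' →
      (fun a b => A a b ∧ ¬(a = x' ∧ b = y')) x' o →
      (∀ v, ¬ (fun a b => A a b ∧ ¬(a = x' ∧ b = y')) o v) ∧
      (∀ a, (fun a b => A a b ∧ ¬(a = x' ∧ b = y')) a o → a = x') := by
    intro o hsub ho
    have hox : o = x := hsub.2.2.unique ho hAmx'x
    rw [hox]
    exact ⟨fun v h => hlx.2 v h.1, fun a h => hxu a h.1⟩
  have hinvAm := delarc_inv hx'y' hx'x hlx.2 ⟨y, hy'y⟩ hdag hld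
  rcases hsup1 with ⟨hnsub, hteq, hAeq⟩ | ⟨hsub1, z, o, hz, ho, hteq, hA1⟩
  · -- x' not suppressed
    rw [hteq, hAeq] at hsup2
    have hyAm : ∀ o, IsSubdiv s (fun a b => A a b ∧ ¬(a = x' ∧ b = y')) y' →
        (fun a b => A a b ∧ ¬(a = x' ∧ b = y')) y' o →
        (∀ v, ¬ (fun a b => A a b ∧ ¬(a = x' ∧ b = y')) o v) ∧
        (∀ a, (fun a b => A a b ∧ ¬(a = x' ∧ b = y')) a o → a = y') := by
      intro o hsub ho
      have hoy : o = y := hsub.2.2.unique ho hAmy'y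
      rw [hoy]
      exact ⟨fun v h => hly.2 v h.1, fun a h => hyu a h.1⟩
    constructor
    · exact suppress_inv hsup2 hinvAm.1 hinvAm.2 hyAm
    · intro P' hP'
      obtain ⟨Q, hQ⟩ := transfer_suppress hsup2 hAmsupp hyAm hP'
      exact transfer_delarc hacyc (fun a b h => hsupp h) hx'y' hx'x hlx.2 hxu
        ⟨y, hy'y⟩ (fun a b => Iff.rfl) hQ
  · -- x' suppressed
    rw [hteq] at hsup2
    have hox : o = x := hsub1.2.2.unique ho hAmx'x
    rw [hox] at ho hA1
    have hsup1' : SuppressIf s (fun a b => A a b ∧ ¬(a = x' ∧ b = y')) x'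
        (s \ {x'}) A₁ := Or.inr ⟨hsub1, z, x, hz, ho, rfl, hA1⟩
    have hA1iff : ∀ a b, A₁ a b ↔
        (((A a b ∧ ¬(a = x' ∧ b = y')) ∧ a ≠ x' ∧ b ≠ x') ∨ (a = z ∧ b = x)) := by
      intro a b; rw [hA1]
    have hznx' : z ≠ x' := fun h => hirr x' (by rw [h] at hz; exact hz.1)
    have hA1y'y : A₁ y' y := (hA1iff _ _).2 (Or.inl ⟨hAmy'y, hxy'.symm, hynx'⟩)
    have hyleafA₁ : ∀ v, ¬ A₁ y v := by
      intro v hv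
      rcases (hA1iff _ _).1 hv with ⟨h, -, -⟩ | ⟨h1, -⟩
      · exact hly.2 v h.1
      · exact hly.2 x' (by rw [h1]; exact hz.1)
    have hyuA₁ : ∀ a, A₁ a y → a = y' := by
      intro a ha
      rcases (hA1iff _ _).1 ha with ⟨h, -, -⟩ | ⟨-, h2⟩
      · exact hyu a h.1
      · exact absurd h2 (Ne.symm hxy)
    have hyA₁ : ∀ o₂, IsSubdiv (s \ {x'}) A₁ y' → A₁ y' o₂ →
        (∀ v, ¬ A₁ o₂ v) ∧ (∀ a, A₁ a o₂ → a = y') := by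
      intro o₂ hsub ho₂
      have hoy : o₂ = y := hsub.2.2.unique ho₂ hA1y'y
      rw [hoy]
      exact ⟨hyleafA₁, hyuA₁⟩
    have hA1supp : ∀ a b, A₁ a b → a ∈ s \ {x'} ∧ b ∈ s \ {x'} := by
      intro a b hab
      rcases (hA1iff _ _).1 hab with ⟨h, hax, hbx⟩ | ⟨h1, h2⟩
      · exact ⟨⟨(hsupp h.1).1, by simp [hax]⟩, ⟨(hsupp h.1).2, by simp [hbx]⟩⟩
      · rw [h1, h2]
        exact ⟨⟨(hsupp hz.1).1, by simp [hznx']⟩, ⟨(hsupp hx'x).2, by simp [hxnx']⟩⟩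
    have hinv1 := suppress_inv hsup1' hinvAm.1 hinvAm.2 hxAm
    constructor
    · exact suppress_inv hsup2 hinv1.1 hinv1.2 hyA₁
    · intro P' hP'
      obtain ⟨Q₁, hQ₁⟩ := transfer_suppress hsup2 hA1supp hyA₁ hP'
      obtain ⟨Q, hQ⟩ := transfer_suppress hsup1' hAmsupp hxAm hQ₁
      exact transfer_delarc hacyc (fun a b h => hsupp h) hx'y' hx'x hlx.2 hxu
        ⟨y, hy'y⟩ (fun a b => Iff.rfl) hQ
lemma base_reduced {t : Set U} {B : U → U → Prop} (hred : Reduced t B)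
    (hsupp : ∀ ⦃a b⦄, B a b → a ∈ t ∧ b ∈ t) : ∃ P, IsLeafIPPOn t B P := by
  have hkey : ∀ a b, B a b → (∀ w, ¬ B w a) ∧ (∀ w, ¬ B b w) := by
    intro a b hab
    exact (hred a (hsupp hab).1).2 a b hab Relation.ReflTransGen.refl
  have hne : ∀ a b, B a b → a ≠ b := fun a b hab h =>
    (hkey a b hab).2 b (by rw [h] at hab; exact hab)
  refine ⟨{p | ∃ a b, p = [a, b] ∧ B a b}, ?_, ?_, ?_⟩
  · rintro p ⟨a, b, rfl, hab⟩
    refine induced_iff.2 ⟨by simp, by simp [hne a b hab], by simp [List.Chain', hab], ?_, ?_⟩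
    · intro v hv
      rcases List.mem_cons.1 hv with rfl | hv
      · exact (hsupp hab).1
      · simp only [List.mem_singleton] at hv
        rw [hv]
        exact (hsupp hab).2
    · intro c d hc hd hcd
      simp only [List.mem_cons, List.mem_singleton, List.not_mem_nil, or_false] at hc hd
      rcases hc with hca | hcb <;> rcases hd with hda | hdb
      · rw [hca, hda] at hcd
        exact absurd hcd ((hkey a b hab).1 a)
      · rw [hca, hdb]
        exact nxt_of_eq_append (l := []) (r := []) rfl
      · rw [hcb, hda] at hcd
        exact absurd hcd ((hkey a b hab).2 a)
      · rw [hcb, hdb] at hcd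
        exact absurd hcd ((hkey a b hab).2 b)
  · intro v hv
    obtain ⟨⟨e, ⟨heB, heR⟩, hequ⟩, -⟩ := hred v hv
    have hv_e : v = e.1 ∨ v = e.2 := by
      rcases Relation.ReflTransGen.cases_head heR with h | ⟨c, hvc, hcr⟩
      · left; exact h
      · rcases hvc with h | h
        · left
          rw [← hequ (v, c) ⟨h, Relation.ReflTransGen.refl⟩]
        · right
          rw [← hequ (c, v) ⟨h, Relation.ReflTransGen.single (Or.inr h)⟩]
    refine ⟨[e.1, e.2], ⟨⟨e.1, e.2, rfl, heB⟩, by rcases hv_e with h | h <;> simp [h]⟩, ?_⟩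
    rintro r ⟨⟨a, b, rfl, hab⟩, hvr⟩
    have hva : Relation.ReflTransGen (fun a b => B a b ∨ B b a) v a := by
      simp only [List.mem_cons, List.mem_singleton, List.not_mem_nil, or_false] at hvr
      rcases hvr with rfl | rfl
      · exact Relation.ReflTransGen.refl
      · exact Relation.ReflTransGen.single (Or.inr hab)
    have he : (a, b) = e := hequ (a, b) ⟨hab, hva⟩
    rw [← he]
  · rintro p ⟨a, b, rfl, hab⟩
    exact ⟨b, by simp, (hsupp hab).2, (hkey a b hab).2⟩

lemma main_induction {N N' : Set U × (U → U → Prop)}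
    (h : Relation.ReflTransGen CherryStep N N') (hred : Reduced N'.1 N'.2) :
    IsDag N.1 N.2 → (∀ v, DLeaf N.1 N.2 v → ∃! u, N.2 u v) →
      ∃ P, IsLeafIPPOn N.1 N.2 P := by
  induction h using Relation.ReflTransGen.head_induction_on with
  | refl =>
    intro hdag _
    exact base_reduced hred hdag.2.1
  | head hstep htail ih =>
    intro hdag hld
    obtain ⟨x, y, hst | hrt⟩ := hstep
    · obtain ⟨hinv', htr⟩ := step_standard hst hdag hld
      obtain ⟨P', hP'⟩ := ih hinv'.1 hinv'.2
      exact htr P' hP'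
    · obtain ⟨hinv', htr⟩ := step_retic hrt hdag hld
      obtain ⟨P', hP'⟩ := ih hinv'.1 hinv'.2
      exact htr P' hP'
/-- Every reducible DAG (with no subdivision vertex, all of
whose leaves have indegree 1) admits a leaf induced path partition. -/
theorem reducible_leafIPP
    {U : Type*} (s : Set U) (A : U → U → Prop)
    (hdag : IsDag s A)
    (hnosub : ∀ v, ¬ IsSubdiv s A v)
    (hleafdeg : ∀ v, DLeaf s A v → ∃! w, A w v)
    (hred : Reducible s A) :
    ∃ P : Set (List U), IsLeafIPPOn s A P := by
  obtain ⟨N2, hrtg, hredN⟩ := hred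
  exact main_induction hrtg hredN hdag hleafdeg

end Paper
end

section
/- Let N be a DAG with no subdivision vertex in which all leaves have indegree 1, let (x, y) be a standard cherry of N, and let N' be the DAG obtained from N by the cherry-picking operation on (x, y). If N' admits a leaf induced path partition, then N admits a leaf induced path partition. -/
/-!
Finite directed acyclic graphs (DAGs) whose vertex set may shrink under
cherry-picking operations are represented by a pair consisting of a vertex set
`s : Set U` inside an ambient type `U` and an arc relation `A : U → U → Prop`
supported on `s`.
-/

namespace Paper

variable {U : Type*}

private lemma chain'_mono_mem {A B : U → U → Prop} :
    ∀ {l : List U}, List.Chain' A l →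
      (∀ a ∈ l, ∀ b ∈ l, A a b → B a b) → List.Chain' B l
  | [], _, _ => List.isChain_nil
  | [a], _, _ => List.isChain_singleton a
  | a :: b :: l, h, H => by
    unfold List.Chain' at h ⊢
    rw [List.isChain_cons_cons] at h ⊢
    refine ⟨H a (by simp) b (by simp) h.1, chain'_mono_mem h.2 ?_⟩
    intro c hc d hd hcd
    exact H c (List.mem_cons_of_mem _ hc) d (List.mem_cons_of_mem _ hd) hcd

private lemma sink_getLast {A : U → U → Prop} {p : List U} (hc : List.Chain' A p)
    (hne : p ≠ []) {v : U} (hv : v ∈ p) (hs : ∀ u, ¬ A v u) :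
    p.getLast hne = v := by
  obtain ⟨i, hi, rfl⟩ := List.mem_iff_getElem.mp hv
  rcases Nat.lt_or_ge i (p.length - 1) with h1 | h1
  · have h2 := List.isChain_iff_getElem.mp hc i (by omega)
    exact absurd h2 (hs _)
  · rw [List.getLast_eq_getElem]
    congr 1
    omega

/-- Let `N = (s, A)` be a DAG with no subdivision vertex in
which all leaves have indegree 1, let `(x, y)` be a standard cherry of `N`, and
let `N' = (s', A')` be the DAG obtained from `N` by the cherry-picking
operation on `(x, y)`.  If `N'` admits a leaf induced path partition, then so
does `N`. -/
theorem standardPick_leafIPP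
    {U : Type*} (s : Set U) (A : U → U → Prop)
    (hdag : IsDag s A)
    (hnosub : ∀ v, ¬ IsSubdiv s A v)
    (hleafdeg : ∀ v, DLeaf s A v → ∃! w, A w v)
    (x y : U) (s' : Set U) (A' : U → U → Prop)
    (hpick : StandardPickAt s A x y s' A')
    (h : ∃ P : Set (List U), IsLeafIPPOn s' A' P) :
    ∃ P : Set (List U), IsLeafIPPOn s A P := by
  classical
  obtain ⟨P', hP1, hP2, hP3⟩ := h
  obtain ⟨⟨hxy, hlx, hly, -⟩, w, hwx, hwy, hsup⟩ := hpick
  obtain ⟨hfin, harcs, hacyc⟩ := hdag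
  have hxs : x ∈ s := (harcs hwx).2
  have hys : y ∈ s := (harcs hwy).2
  have hws : w ∈ s := (harcs hwx).1
  have hyw : y ≠ w := by rintro rfl; exact hacyc y (Relation.TransGen.single hwy)
  have hxw : x ≠ w := by rintro rfl; exact hacyc x (Relation.TransGen.single hwx)
  have hwy' : w ≠ y := Ne.symm hyw
  have hxin : ∀ u, A u x → u = w := by
    intro u hu
    obtain ⟨u₀, -, hu₀⟩ := hleafdeg x hlx
    exact (hu₀ u hu).trans (hu₀ w hwx).symm
  have hyin : ∀ u, A u y → u = w := by
    intro u hu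
    obtain ⟨u₀, -, hu₀⟩ := hleafdeg y hly
    exact (hu₀ u hu).trans (hu₀ w hwy).symm
  have hIPy : IsInducedPathOn s A [y] := by
    refine ⟨⟨by simp, by simp, List.isChain_singleton y, by simpa using hys⟩, ?_⟩
    intro i j hij
    simp only [List.get_eq_getElem, List.getElem_singleton] at hij
    exact absurd hij (hly.2 y)
  rcases hsup with ⟨-, rfl, rfl⟩ | ⟨hsubw, z, o, hzw, hwo, rfl, rfl⟩
  · -- Case 1 : no suppression
    have hney : ∀ p ∈ P', ∀ v ∈ p, v ∈ s ∧ v ≠ y := by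
      intro p hp v hv
      have hv' := (hP1 p hp).1.2.2.2 v hv
      exact ⟨hv'.1, fun h => hv'.2 h⟩
    have hleaf' : ∀ v, DLeaf (s \ {y}) (fun a b => A a b ∧ a ≠ y ∧ b ≠ y) v →
        DLeaf s A v := by
      rintro v ⟨⟨hvs, hvy⟩, hno⟩
      have hvy' : v ≠ y := fun h => hvy h
      refine ⟨hvs, fun u hu => ?_⟩
      by_cases huy : u = y
      · subst huy
        have hvw : v = w := hyin v hu
        exact hno x ⟨by rw [hvw]; exact hwx, hvy', hxy⟩
      · exact hno u ⟨hu, hvy', huy⟩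
    refine ⟨insert [y] P', ?_, ?_, ?_⟩
    · rintro p (rfl | hp)
      · exact hIPy
      · obtain ⟨⟨hne, hnd, hc, hmem⟩, hind⟩ := hP1 p hp
        refine ⟨⟨hne, hnd, List.IsChain.imp (fun a b hab => hab.1) hc,
          fun v hv => (hney p hp v hv).1⟩, ?_⟩
        intro i j hij
        exact hind i j ⟨hij, (hney p hp _ (List.get_mem p i)).2,
          (hney p hp _ (List.get_mem p j)).2⟩
    · intro v hv
      by_cases hvy : v = y
      · rw [hvy]
        refine ⟨[y], ⟨Set.mem_insert _ _, by simp⟩, ?_⟩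
        rintro q ⟨hq, hyq⟩
        rcases hq with rfl | hq
        · rfl
        · exact absurd rfl (hney q hq y hyq).2
      · obtain ⟨p, ⟨hp, hvp⟩, hpu⟩ := hP2 v ⟨hv, hvy⟩
        refine ⟨p, ⟨Set.mem_insert_of_mem _ hp, hvp⟩, ?_⟩
        rintro q ⟨hq, hvq⟩
        rcases hq with rfl | hq
        · simp at hvq; exact absurd hvq hvy
        · exact hpu q ⟨hq, hvq⟩
    · rintro p (rfl | hp)
      · exact ⟨y, by simp, hly⟩
      · obtain ⟨x', h1, h2⟩ := hP3 p hp
        exact ⟨x', h1, hleaf' x' h2⟩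
  · -- Case 2 : w was suppressed
    have hzAw : A z w := hzw.1
    have hzy : z ≠ y := hzw.2.1
    have hzw' : z ≠ w := by rintro rfl; exact hacyc z (Relation.TransGen.single hzAw)
    have hzx : z ≠ x := by rintro rfl; exact hlx.2 w hzAw
    have hzs : z ∈ s := (harcs hzAw).1
    have houtw : ∀ b, A w b → b ≠ y → b = x := by
      intro b hb hby
      obtain ⟨-, -, o₁, ho₁, ho₁u⟩ := hsubw
      exact (ho₁u b ⟨hb, hwy', hby⟩).trans (ho₁u x ⟨hwx, hwy', hxy⟩).symm
    have ho : x = o := (houtw o hwo.1 hwo.2.2).symm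
    subst ho
    have hinw : ∀ u, A u w → u = z := by
      intro u hu
      by_cases huy : u = y
      · subst huy; exact absurd hu (hly.2 w)
      · obtain ⟨-, ⟨z₁, hz₁, hz₁u⟩, -⟩ := hsubw
        exact (hz₁u u ⟨hu, huy, hwy'⟩).trans (hz₁u z hzw).symm
    have hBintro : ∀ a b, A a b → a ≠ y → b ≠ y → a ≠ w → b ≠ w →
        ((A a b ∧ a ≠ y ∧ b ≠ y) ∧ a ≠ w ∧ b ≠ w) ∨ (a = z ∧ b = x) :=
      fun a b h h1 h2 h3 h4 => Or.inl ⟨⟨h, h1, h2⟩, h3, h4⟩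
    have hBelim : ∀ a b, ((A a b ∧ a ≠ y ∧ b ≠ y) ∧ a ≠ w ∧ b ≠ w) ∨ (a = z ∧ b = x) →
        A a b ∨ (a = z ∧ b = x) := by
      rintro a b (⟨⟨h, -⟩, -⟩ | h)
      exacts [Or.inl h, Or.inr h]
    have hs₂elim : ∀ v, v ∈ (s \ {y}) \ {w} → v ∈ s ∧ v ≠ y ∧ v ≠ w := by
      intro v hv
      exact ⟨hv.1.1, fun h => hv.1.2 h, fun h => hv.2 h⟩
    have hs₂intro : ∀ v, v ∈ s → v ≠ y → v ≠ w → v ∈ (s \ {y}) \ {w} :=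
      fun v h1 h2 h3 => ⟨⟨h1, h2⟩, h3⟩
    have hxs₂ : x ∈ (s \ {y}) \ {w} := hs₂intro x hxs hxy hxw
    have hxleafB : DLeaf ((s \ {y}) \ {w})
        (fun a b => ((A a b ∧ a ≠ y ∧ b ≠ y) ∧ a ≠ w ∧ b ≠ w) ∨ (a = z ∧ b = x)) x := by
      refine ⟨hxs₂, ?_⟩
      rintro u (⟨⟨h, -⟩, -⟩ | ⟨h, -⟩)
      · exact hlx.2 u h
      · exact hzx h.symm
    have hleafB : ∀ v, DLeaf ((s \ {y}) \ {w})
        (fun a b => ((A a b ∧ a ≠ y ∧ b ≠ y) ∧ a ≠ w ∧ b ≠ w) ∨ (a = z ∧ b = x)) v →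
        DLeaf s A v := by
      rintro v ⟨hv, hno⟩
      obtain ⟨hvs, hvy, hvw⟩ := hs₂elim v hv
      refine ⟨hvs, fun u hu => ?_⟩
      by_cases huy : u = y
      · subst huy; exact hvw (hyin v hu)
      · by_cases huw : u = w
        · subst huw
          exact hno x (Or.inr ⟨hinw v hu, rfl⟩)
        · exact hno u (hBintro v u hu hvy huy hvw huw)
    obtain ⟨p, ⟨hpP, hxp⟩, hpu⟩ := hP2 x hxs₂
    obtain ⟨⟨hne, hnd, hc, hmemp⟩, hind⟩ := hP1 p hpP
    have hlastp : p.getLast hne = x := sink_getLast hc hne hxp hxleafB.2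
    obtain ⟨q, hq⟩ : ∃ q, q ++ [x] = p :=
      ⟨p.dropLast, by rw [← hlastp]; exact p.dropLast_append_getLast hne⟩
    have hndq : (q ++ [x]).Nodup := by rw [hq]; exact hnd
    have hxq : x ∉ q := by
      rw [List.nodup_append] at hndq
      exact fun hx => hndq.2.2 x hx x (by simp) rfl
    have hqnd : q.Nodup := by
      rw [List.nodup_append] at hndq; exact hndq.1
    have hqmem : ∀ v ∈ q, v ∈ s ∧ v ≠ y ∧ v ≠ w := by
      intro v hv
      exact hs₂elim v (hmemp v (by rw [← hq]; exact List.mem_append_left _ hv))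
    have hchainq : List.Chain' (fun a b =>
        ((A a b ∧ a ≠ y ∧ b ≠ y) ∧ a ≠ w ∧ b ≠ w) ∨ (a = z ∧ b = x)) q := by
      have hcc := hc; unfold List.Chain' at hcc; rw [← hq, List.isChain_append] at hcc; exact hcc.1
    have hqz : ∀ (hh : q ≠ []), q.getLast hh = z := by
      intro hh
      have hcc := hc; unfold List.Chain' at hcc; rw [← hq, List.isChain_append] at hcc
      have hB := hcc.2.2 (q.getLast hh)
        (by rw [Option.mem_def]; exact List.getLast?_eq_getLast hh) x rfl
      rcases hB with ⟨⟨hA, -⟩, hnw, -⟩ | ⟨h1, -⟩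
      · exact absurd (hxin _ hA) hnw
      · exact h1
    have hplen : p.length = q.length + 1 := by rw [← hq]; simp
    have hpget : ∀ (i : ℕ) (hi : i < p.length),
        p[i] = if h : i < q.length then q[i] else x := by
      intro i hi
      rw [List.getElem_of_eq hq.symm hi, List.getElem_append]
      split
      · rfl
      · simp
    have hindq : ∀ (i j : ℕ) (hi : i < q.length) (hj : j < q.length),
        ((A q[i] q[j] ∧ q[i] ≠ y ∧ q[j] ≠ y) ∧ q[i] ≠ w ∧ q[j] ≠ w) ∨
          (q[i] = z ∧ q[j] = x) → j = i + 1 := by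
      intro i j hi hj hB
      have := hind ⟨i, by omega⟩ ⟨j, by omega⟩ (by
        rw [List.get_eq_getElem, List.get_eq_getElem]
        simp only [hpget]
        rw [dif_pos hi, dif_pos hj]
        exact hB)
      exact this
    -- the new path q ++ [w, x]
    have hwq : w ∉ q := fun hh => (hqmem w hh).2.2 rfl
    have hyq : y ∉ q := fun hh => (hqmem y hh).2.1 rfl
    have hlen₁ : (q ++ [w, x]).length = q.length + 2 := by simp
    have hp₁get : ∀ (i : ℕ) (hi : i < (q ++ [w, x]).length),
        (q ++ [w, x])[i] = if h : i < q.length then q[i]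
          else if i = q.length then w else x := by
      intro i hi
      rw [List.getElem_append]
      split
      · rfl
      · rename_i hni
        rw [hlen₁] at hi
        rcases (by omega : i - q.length = 0 ∨ i - q.length = 1) with h0 | h1
        · have hiq : i = q.length := by omega
          simp [h0, hiq]
        · have hiq : i ≠ q.length := by omega
          simp [h1, hiq]
    have hindp₁ : ∀ i j : Fin (q ++ [w, x]).length,
        A ((q ++ [w, x]).get i) ((q ++ [w, x]).get j) → (j : ℕ) = (i : ℕ) + 1 := by
      rintro ⟨i, hi⟩ ⟨j, hj⟩ hij
      rw [List.get_eq_getElem, List.get_eq_getElem, hp₁get i hi, hp₁get j hj] at hij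
      show j = i + 1
      rw [hlen₁] at hi hj
      by_cases hiq : i < q.length
      · rw [dif_pos hiq] at hij
        by_cases hjq : j < q.length
        · rw [dif_pos hjq] at hij
          obtain ⟨ha1, ha2, ha3⟩ := hqmem _ (List.getElem_mem hiq)
          obtain ⟨hb1, hb2, hb3⟩ := hqmem _ (List.getElem_mem hjq)
          exact hindq i j hiq hjq (hBintro _ _ hij ha2 hb2 ha3 hb3)
        · rw [dif_neg hjq] at hij
          by_cases hjw : j = q.length
          · rw [if_pos hjw] at hij
            have hz : q[i] = z := hinw _ hij
            have hqne : q ≠ [] := by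
              intro hh; rw [hh] at hiq; simp at hiq
            have hzl : q[q.length - 1]'(by omega) = z := by
              rw [← List.getLast_eq_getElem hqne]; exact hqz hqne
            have hii : i = q.length - 1 :=
              (List.Nodup.getElem_inj_iff hqnd).mp (hz.trans hzl.symm)
            omega
          · rw [if_neg hjw] at hij
            exact absurd (hxin _ hij) (hqmem _ (List.getElem_mem hiq)).2.2
      · rw [dif_neg hiq] at hij
        by_cases hiw : i = q.length
        · rw [if_pos hiw] at hij
          by_cases hjq : j < q.length
          · rw [dif_pos hjq] at hij
            have hx' : q[j] = x := houtw _ hij (hqmem _ (List.getElem_mem hjq)).2.1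
            exact absurd (hx' ▸ List.getElem_mem hjq) hxq
          · rw [dif_neg hjq] at hij
            by_cases hjw : j = q.length
            · rw [if_pos hjw] at hij
              exact absurd (Relation.TransGen.single hij) (hacyc w)
            · omega
        · rw [if_neg hiw] at hij
          exact absurd hij (hlx.2 _)
    have hnd₁ : (q ++ [w, x]).Nodup := by
      rw [List.nodup_append]
      refine ⟨hqnd, by simp [Ne.symm hxw], ?_⟩
      intro a ha b hb
      simp at hb
      rcases hb with rfl | rfl
      exacts [fun h => hwq (h ▸ ha), fun h => hxq (h ▸ ha)]
    have hchain₁ : List.Chain' A (q ++ [w, x]) := by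
      unfold List.Chain'
      rw [List.isChain_append]
      refine ⟨?_, List.isChain_pair.mpr hwx, ?_⟩
      · refine chain'_mono_mem hchainq ?_
        intro a ha b hb hab
        rcases hBelim a b hab with hh | ⟨-, rfl⟩
        · exact hh
        · exact absurd hb hxq
      · intro a ha b hb
        have hqne : q ≠ [] := by rintro rfl; simp at ha
        rw [List.getLast?_eq_getLast hqne] at ha
        simp at ha hb
        subst ha; subst hb
        rw [hqz hqne]
        exact hzAw
    have hmem₁ : ∀ v ∈ q ++ [w, x], v ∈ s := by
      intro v hv
      rcases List.mem_append.mp hv with hh | hh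
      · exact (hqmem v hh).1
      · simp at hh; rcases hh with rfl | rfl
        exacts [hws, hxs]
    have hIP₁ : IsInducedPathOn s A (q ++ [w, x]) :=
      ⟨⟨by simp, hnd₁, hchain₁, hmem₁⟩, hindp₁⟩
    have hxonly : ∀ t ∈ P', x ∈ t → t = p := fun t ht hxt => hpu t ⟨ht, hxt⟩
    have hIPother : ∀ t ∈ P', t ≠ p → IsInducedPathOn s A t := by
      intro t ht htp
      obtain ⟨⟨tne, tnd, tc, tmem⟩, tind⟩ := hP1 t ht
      have hxt : x ∉ t := fun hx => htp (hxonly t ht hx)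
      refine ⟨⟨tne, tnd, ?_, fun v hv => (hs₂elim v (tmem v hv)).1⟩, ?_⟩
      · refine chain'_mono_mem tc ?_
        intro a ha b hb hab
        rcases hBelim a b hab with hh | ⟨-, rfl⟩
        · exact hh
        · exact absurd hb hxt
      · intro i j hij
        obtain ⟨-, ha2, ha3⟩ := hs₂elim _ (tmem _ (List.get_mem t i))
        obtain ⟨-, hb2, hb3⟩ := hs₂elim _ (tmem _ (List.get_mem t j))
        exact tind i j (hBintro _ _ hij ha2 hb2 ha3 hb3)
    have hynotp₁ : y ∉ q ++ [w, x] := by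
      simp only [List.mem_append, List.mem_cons, List.mem_singleton]
      push_neg
      exact ⟨hyq, hyw, Ne.symm hxy, by simp⟩
    refine ⟨insert [y] (insert (q ++ [w, x]) (P' \ {p})), ?_, ?_, ?_⟩
    · rintro t (rfl | rfl | ⟨ht, htp⟩)
      · exact hIPy
      · exact hIP₁
      · exact hIPother t ht (fun hh => htp hh)
    · intro v hv
      by_cases hvy : v = y
      · rw [hvy]
        refine ⟨[y], ⟨Set.mem_insert _ _, by simp⟩, ?_⟩
        rintro t ⟨ht, hyt⟩
        rcases ht with rfl | rfl | ⟨ht, -⟩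
        · rfl
        · exact absurd hyt hynotp₁
        · exact absurd rfl (hs₂elim y ((hP1 t ht).1.2.2.2 y hyt)).2.1
      · by_cases hvw : v = w
        · rw [hvw]
          refine ⟨q ++ [w, x], ⟨Set.mem_insert_of_mem _ (Set.mem_insert _ _),
            by simp⟩, ?_⟩
          rintro t ⟨ht, hwt⟩
          rcases ht with rfl | rfl | ⟨ht, -⟩
          · simp at hwt; exact absurd hwt hwy'
          · rfl
          · exact absurd rfl (hs₂elim w ((hP1 t ht).1.2.2.2 w hwt)).2.2
        · obtain ⟨t₀, ⟨ht₀, hvt₀⟩, ht₀u⟩ := hP2 v (hs₂intro v hv hvy hvw)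
          by_cases hvp : v ∈ p
          · have hvp₁ : v ∈ q ++ [w, x] := by
              rw [← hq] at hvp
              rcases List.mem_append.mp hvp with hh | hh
              · exact List.mem_append_left _ hh
              · simp at hh; subst hh; simp
            refine ⟨q ++ [w, x], ⟨Set.mem_insert_of_mem _ (Set.mem_insert _ _),
              hvp₁⟩, ?_⟩
            rintro t ⟨ht, hvt⟩
            rcases ht with rfl | rfl | ⟨ht, htp⟩
            · simp at hvt; exact absurd hvt hvy
            · rfl
            · exact absurd ((ht₀u t ⟨ht, hvt⟩).trans (ht₀u p ⟨hpP, hvp⟩).symm)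
                (fun hh => htp hh)
          · have ht₀p : t₀ ≠ p := fun hh => hvp (hh ▸ hvt₀)
            refine ⟨t₀, ⟨Set.mem_insert_of_mem _ (Set.mem_insert_of_mem _
              ⟨ht₀, fun hh => ht₀p hh⟩), hvt₀⟩, ?_⟩
            rintro t ⟨ht, hvt⟩
            rcases ht with rfl | rfl | ⟨ht, -⟩
            · simp at hvt; exact absurd hvt hvy
            · exfalso
              rcases List.mem_append.mp hvt with hh | hh
              · exact hvp (by rw [← hq]; exact List.mem_append_left _ hh)
              · simp at hh
                rcases hh with rfl | rfl
                · exact hvw rfl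
                · exact hvp hxp
            · exact ht₀u t ⟨ht, hvt⟩
    · rintro t (rfl | rfl | ⟨ht, -⟩)
      · exact ⟨y, by simp, hly⟩
      · refine ⟨x, ?_, hlx⟩
        rw [List.getLast?_append]
        simp
      · obtain ⟨x', h1, h2⟩ := hP3 t ht
        exact ⟨x', h1, hleafB x' h2⟩

end Paper
end
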